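/- arXiv:2604.00133 — 11 statements merged into one kernel-verified Lean document; each statement's English description precedes it below -/
import Mathlib

section
/- Under randomization, consistency, and monotonicity, E[Y(1) | S(0)=1, S(1)=1] = E[Y | Z=1, S=1], provided P(Z=1, S(1)=1) > 0. -/
open MeasureTheory ProbabilityTheory

/-- Probability of an event as a real number. -/
noncomputable def Pr {Ω : Type*} [MeasurableSpace Ω] (μ : Measure Ω) (A : Set Ω) : ℝ :=
  (μ A).toReal

/-- Conditional expectation of `Y` given the event `A` (as a ratio). -/
noncomputable def cexp {Ω : Type*} [MeasurableSpace Ω] (μ : Measure Ω) (Y : Ω → ℝ)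
    (A : Set Ω) : ℝ :=
  (∫ ω in A, Y ω ∂μ) / Pr μ A

/-- Identification of the Doomed-stratum mean under vaccine:
`E[Y(1) | S(0)=1, S(1)=1] = E[Y | Z=1, S=1]`. -/
theorem id_EY1_doomed
    {Ω : Type*} [MeasurableSpace Ω] (μ : Measure Ω) [IsProbabilityMeasure μ]
    (Z S0 S1 Y0 Y1 S Y : Ω → ℝ)
    (hZm : Measurable Z) (hS0m : Measurable S0) (hS1m : Measurable S1)
    (hY0m : Measurable Y0) (hY1m : Measurable Y1)
    (hZ : ∀ ω, Z ω = 0 ∨ Z ω = 1)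
    (hS0 : ∀ ω, S0 ω = 0 ∨ S0 ω = 1) (hS1 : ∀ ω, S1 ω = 0 ∨ S1 ω = 1)
    (hindep : IndepFun Z (fun ω => (S0 ω, S1 ω, Y0 ω, Y1 ω)) μ)
    (hconsS : ∀ ω, S ω = if Z ω = 1 then S1 ω else S0 ω)
    (hconsY : ∀ ω, Y ω = if Z ω = 1 then Y1 ω else Y0 ω)
    (hmono : ∀ᵐ ω ∂μ, S1 ω ≤ S0 ω)
    (hint : Integrable Y1 μ)
    (hpos : 0 < Pr μ {ω | Z ω = 1 ∧ S1 ω = 1}) :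
    cexp μ Y1 {ω | S0 ω = 1 ∧ S1 ω = 1} = cexp μ Y {ω | Z ω = 1 ∧ S ω = 1} := by
  -- measurable sets
  have hAz : MeasurableSet {ω | Z ω = 1} := hZm (measurableSet_singleton 1)
  have hAs : MeasurableSet {ω | S1 ω = 1} := hS1m (measurableSet_singleton 1)
  -- Step 1: the event {Z=1 ∧ S=1} equals {Z=1 ∧ S1=1}
  have hset1 : {ω | Z ω = 1 ∧ S ω = 1} = {ω | Z ω = 1} ∩ {ω | S1 ω = 1} := by
    ext ω
    simp only [Set.mem_setOf_eq, Set.mem_inter_iff, hconsS ω]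
    constructor
    · rintro ⟨hz, hs⟩; rw [if_pos hz] at hs; exact ⟨hz, hs⟩
    · rintro ⟨hz, hs⟩; exact ⟨hz, by rw [if_pos hz]; exact hs⟩
  -- Step 2: Y = Y1 on {Z=1 ∧ S1=1}
  have hYeq : ∀ ω ∈ {ω | Z ω = 1} ∩ {ω | S1 ω = 1}, Y ω = Y1 ω := by
    rintro ω ⟨hz, _⟩
    rw [hconsY ω]
    exact if_pos hz
  -- Step 3: {S0=1 ∧ S1=1} =ᵐ {S1=1}
  have hsetae : {ω | S0 ω = 1 ∧ S1 ω = 1} =ᵐ[μ] {ω | S1 ω = 1} := by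
    filter_upwards [hmono] with ω hω
    simp only [Set.mem_setOf_eq, eq_iff_iff]
    constructor
    · rintro ⟨_, h⟩; exact h
    · intro h
      refine ⟨?_, h⟩
      rcases hS0 ω with h0 | h0
      · rw [h0] at hω; rw [h] at hω; linarith
      · exact h0
  -- Independence of indicator functions
  have hF : Measurable fun z : ℝ => if z = 1 then (1:ℝ) else 0 :=
    Measurable.ite (measurableSet_singleton 1) measurable_const measurable_const
  have hG : Measurable fun p : ℝ × ℝ × ℝ × ℝ => if p.2.1 = 1 then p.2.2.2 else 0 := by
    apply Measurable.ite
    · exact (measurable_fst.comp measurable_snd) (measurableSet_singleton 1)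
    · exact measurable_snd.comp (measurable_snd.comp measurable_snd)
    · exact measurable_const
  have hindep2 : IndepFun (fun ω => if Z ω = 1 then (1:ℝ) else 0)
      (fun ω => if S1 ω = 1 then Y1 ω else 0) μ :=
    hindep.comp hF hG
  -- integrability
  have hintF : Integrable (fun ω => if Z ω = 1 then (1:ℝ) else 0) μ := by
    apply Integrable.mono' (integrable_const (1:ℝ))
    · exact ((hF.comp hZm)).aestronglyMeasurable
    · filter_upwards with ω
      by_cases h : Z ω = 1 <;> simp [h]
  have hintG : Integrable (fun ω => if S1 ω = 1 then Y1 ω else 0) μ := by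
    apply hint.abs.mono' ((hG.comp ((hS0m.prodMk (hS1m.prodMk (hY0m.prodMk hY1m)))))).aestronglyMeasurable
    filter_upwards with ω
    by_cases h : S1 ω = 1 <;> simp [h, abs_nonneg]
  -- product formula for the integral
  have hmul := hindep2.integral_mul_eq_mul_integral hintF.aestronglyMeasurable hintG.aestronglyMeasurable
  have hFG : (fun ω => (if Z ω = 1 then (1:ℝ) else 0) * (if S1 ω = 1 then Y1 ω else 0))
      = ({ω | Z ω = 1} ∩ {ω | S1 ω = 1}).indicator Y1 := by
    ext ω
    by_cases hz : Z ω = 1 <;> by_cases hs : S1 ω = 1 <;>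
      simp [Set.indicator_apply, hz, hs]
  have hintI : ∫ ω in {ω | Z ω = 1} ∩ {ω | S1 ω = 1}, Y1 ω ∂μ
      = (μ {ω | Z ω = 1}).toReal * ∫ ω in {ω | S1 ω = 1}, Y1 ω ∂μ := by
    have h1 : ∫ ω, (fun ω => (if Z ω = 1 then (1:ℝ) else 0) * (if S1 ω = 1 then Y1 ω else 0)) ω ∂μ
        = ∫ ω in {ω | Z ω = 1} ∩ {ω | S1 ω = 1}, Y1 ω ∂μ := by
      rw [hFG, integral_indicator (hAz.inter hAs)]
    have h2 : ∫ ω, (if Z ω = 1 then (1:ℝ) else 0) ∂μ = (μ {ω | Z ω = 1}).toReal := by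
      have : (fun ω => if Z ω = 1 then (1:ℝ) else 0) = ({ω | Z ω = 1}).indicator 1 := by
        ext ω; by_cases h : Z ω = 1 <;> simp [Set.indicator_apply, h]
      rw [this, integral_indicator hAz]
      simp; rfl
    have h3 : ∫ ω, (if S1 ω = 1 then Y1 ω else 0) ∂μ = ∫ ω in {ω | S1 ω = 1}, Y1 ω ∂μ := by
      have : (fun ω => if S1 ω = 1 then Y1 ω else 0) = ({ω | S1 ω = 1}).indicator Y1 := by
        ext ω; by_cases h : S1 ω = 1 <;> simp [Set.indicator_apply, h]
      rw [this, integral_indicator hAs]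
    simp only [Pi.mul_apply] at hmul
    rw [← h1, ← h2, ← h3]
    exact hmul
  -- product formula for the measure
  have hmeas : μ ({ω | Z ω = 1} ∩ {ω | S1 ω = 1}) = μ {ω | Z ω = 1} * μ {ω | S1 ω = 1} := by
    have := hindep.measure_inter_preimage_eq_mul {(1:ℝ)}
      {p : ℝ × ℝ × ℝ × ℝ | p.2.1 = 1} (measurableSet_singleton 1)
      ((measurable_fst.comp measurable_snd) (measurableSet_singleton 1))
    convert this using 2 <;> rfl
  -- positivity
  have hposm : 0 < μ ({ω | Z ω = 1} ∩ {ω | S1 ω = 1}) := by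
    have : {ω | Z ω = 1 ∧ S1 ω = 1} = {ω | Z ω = 1} ∩ {ω | S1 ω = 1} := rfl
    rw [Pr, this] at hpos
    exact (ENNReal.toReal_pos_iff.mp hpos).1
  have hposZ : (0:ℝ) < (μ {ω | Z ω = 1}).toReal := by
    rw [hmeas] at hposm
    refine ENNReal.toReal_pos (fun h => by simp [h] at hposm) (measure_ne_top μ _)
  -- put it together
  rw [hset1]
  unfold cexp Pr
  rw [setIntegral_congr_set hsetae, measure_congr hsetae,
      setIntegral_congr_ae (hAz.inter hAs) (Filter.Eventually.of_forall hYeq),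
      hintI, hmeas, ENNReal.toReal_mul,
      mul_div_mul_left _ _ (ne_of_gt hposZ)]
end

section
/- Under randomization, consistency, and monotonicity, with ρ̄_z = P(S=1 | Z=z) and ρ̄_0 > 0, the decomposition E[Y(1) | S(0)=1] = E[Y | Z=1, S=1]·(ρ̄_1/ρ̄_0) + E[Y(1) | S(0)=1, S(1)=0]·(1 − ρ̄_1/ρ̄_0) holds, provided P(S(0)=1, S(1)=0) > 0 and P(S=1, Z=1) > 0. -/
open MeasureTheory ProbabilityTheory

/-- Decomposition of the Naturally Infected mean under vaccine into Doomed and Protected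
components. -/
theorem partial_id_decomposition
    {Ω : Type*} [MeasurableSpace Ω] (μ : Measure Ω) [IsProbabilityMeasure μ]
    (Z S0 S1 Y1 S Y : Ω → ℝ) (ρ0 ρ1 : ℝ)
    (hZm : Measurable Z) (hS0m : Measurable S0) (hS1m : Measurable S1)
    (hY1m : Measurable Y1)
    (hZ : ∀ ω, Z ω = 0 ∨ Z ω = 1)
    (hS0 : ∀ ω, S0 ω = 0 ∨ S0 ω = 1) (hS1 : ∀ ω, S1 ω = 0 ∨ S1 ω = 1)
    (hindep : IndepFun Z (fun ω => (S0 ω, S1 ω, Y1 ω)) μ)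
    (hconsS : ∀ ω, S ω = if Z ω = 1 then S1 ω else S0 ω)
    (hconsY : ∀ ω, Z ω = 1 → Y ω = Y1 ω)
    (hmono : ∀ᵐ ω ∂μ, S1 ω ≤ S0 ω)
    (hint : Integrable Y1 μ)
    (hρ0 : ρ0 = Pr μ {ω | S ω = 1 ∧ Z ω = 0} / Pr μ {ω | Z ω = 0})
    (hρ1 : ρ1 = Pr μ {ω | S ω = 1 ∧ Z ω = 1} / Pr μ {ω | Z ω = 1})
    (hpos0 : 0 < Pr μ {ω | Z ω = 0}) (hpos1 : 0 < Pr μ {ω | Z ω = 1})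
    (hρ0pos : 0 < ρ0) (hlt : ρ1 < ρ0)
    (hposP : 0 < Pr μ {ω | S0 ω = 1 ∧ S1 ω = 0})
    (hposD : 0 < Pr μ {ω | S ω = 1 ∧ Z ω = 1}) :
    cexp μ Y1 {ω | S0 ω = 1}
      = cexp μ Y {ω | Z ω = 1 ∧ S ω = 1} * (ρ1 / ρ0)
        + cexp μ Y1 {ω | S0 ω = 1 ∧ S1 ω = 0} * (1 - ρ1 / ρ0) := by

  classical
  -- basic measurable sets
  have m1 : MeasurableSet ({1} : Set ℝ) := measurableSet_singleton 1
  have m0 : MeasurableSet ({0} : Set ℝ) := measurableSet_singleton 0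
  set W : Ω → ℝ × ℝ × ℝ := fun ω => (S0 ω, S1 ω, Y1 ω) with hWdef
  have hWm : Measurable W := hS0m.prodMk (hS1m.prodMk hY1m)
  set Z1 : Set Ω := Z ⁻¹' {1} with hZ1def
  set Z0 : Set Ω := Z ⁻¹' {0} with hZ0def
  set A1 : Set Ω := S1 ⁻¹' {1} with hA1def
  set A0 : Set Ω := S0 ⁻¹' {1} with hA0def
  set B : Set Ω := {ω | S0 ω = 1 ∧ S1 ω = 0} with hBdef
  have mZ1 : MeasurableSet Z1 := hZm m1
  have mZ0 : MeasurableSet Z0 := hZm m0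
  have mA1 : MeasurableSet A1 := hS1m m1
  have mA0 : MeasurableSet A0 := hS0m m1
  have mB : MeasurableSet B := (hS0m m1).inter (hS1m m0)
  -- real quantities
  set q1 : ℝ := (μ Z1).toReal with hq1def
  set q0 : ℝ := (μ Z0).toReal with hq0def
  set p1 : ℝ := (μ A1).toReal with hp1def
  set p0 : ℝ := (μ A0).toReal with hp0def
  set pB : ℝ := (μ B).toReal with hpBdef
  -- set identifications
  have hsetZ1 : {ω | Z ω = 1} = Z1 := rfl
  have hsetZ0 : {ω | Z ω = 0} = Z0 := rfl
  have hset1 : {ω | S ω = 1 ∧ Z ω = 1} = Z1 ∩ A1 := by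
    ext ω
    simp only [Set.mem_setOf_eq, Set.mem_inter_iff, hZ1def, hA1def, Set.mem_preimage,
      Set.mem_singleton_iff]
    constructor
    · rintro ⟨hs, hz⟩
      refine ⟨hz, ?_⟩
      rw [hconsS ω, if_pos hz] at hs
      exact hs
    · rintro ⟨hz, hs⟩
      refine ⟨?_, hz⟩
      rw [hconsS ω, if_pos hz]
      exact hs
  have hset1' : {ω | Z ω = 1 ∧ S ω = 1} = Z1 ∩ A1 := by
    rw [← hset1]; ext ω; exact and_comm
  have hset0 : {ω | S ω = 1 ∧ Z ω = 0} = Z0 ∩ A0 := by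
    ext ω
    simp only [Set.mem_setOf_eq, Set.mem_inter_iff, hZ0def, hA0def, Set.mem_preimage,
      Set.mem_singleton_iff]
    constructor
    · rintro ⟨hs, hz⟩
      refine ⟨hz, ?_⟩
      rw [hconsS ω, if_neg (by rw [hz]; norm_num)] at hs
      exact hs
    · rintro ⟨hz, hs⟩
      refine ⟨?_, hz⟩
      rw [hconsS ω, if_neg (by rw [hz]; norm_num)]
      exact hs
  -- independence for measures
  have hT1 : MeasurableSet {p : ℝ × ℝ × ℝ | p.2.1 = 1} :=
    (measurable_fst.comp measurable_snd) m1
  have hT0 : MeasurableSet {p : ℝ × ℝ × ℝ | p.1 = 1} := measurable_fst m1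
  have hWA1 : W ⁻¹' {p : ℝ × ℝ × ℝ | p.2.1 = 1} = A1 := rfl
  have hWA0 : W ⁻¹' {p : ℝ × ℝ × ℝ | p.1 = 1} = A0 := rfl
  have hmu1 : μ (Z1 ∩ A1) = μ Z1 * μ A1 := by
    have := hindep.measure_inter_preimage_eq_mul {(1:ℝ)} {p : ℝ × ℝ × ℝ | p.2.1 = 1} m1 hT1
    simpa [hWA1] using this
  have hmu0 : μ (Z0 ∩ A0) = μ Z0 * μ A0 := by
    have := hindep.measure_inter_preimage_eq_mul {(0:ℝ)} {p : ℝ × ℝ × ℝ | p.1 = 1} m0 hT0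
    simpa [hWA0] using this
  -- ρ identifications
  have hρ1p : ρ1 = p1 := by
    rw [hρ1, Pr, Pr, hset1, hsetZ1, hmu1, ENNReal.toReal_mul]
    rw [Pr, hsetZ1] at hpos1
    field_simp
    rfl
  have hρ0p : ρ0 = p0 := by
    rw [hρ0, Pr, Pr, hset0, hsetZ0, hmu0, ENNReal.toReal_mul]
    rw [Pr, hsetZ0] at hpos0
    field_simp
    rfl
  -- positivity
  have hq1pos : 0 < q1 := by rw [Pr, hsetZ1] at hpos1; exact hpos1
  have hp0pos : 0 < p0 := hρ0p ▸ hρ0pos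
  have hp1pos : 0 < p1 := by
    rw [Pr, hset1, hmu1, ENNReal.toReal_mul] at hposD
    rcases mul_pos_iff.mp hposD with ⟨_, h⟩ | ⟨h, _⟩
    · exact h
    · linarith
  have hpBpos : 0 < pB := hposP
  -- decomposition of A0
  have hdisj : Disjoint A1 B := by
    rw [Set.disjoint_left]
    rintro ω h1 ⟨_, h0⟩
    rw [hA1def, Set.mem_preimage, Set.mem_singleton_iff] at h1
    rw [h1] at h0; norm_num at h0
  have hA0ae : A0 =ᵐ[μ] ((A1 ∪ B : Set Ω)) := by
    rw [Filter.eventuallyEq_set]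
    filter_upwards [hmono] with ω hm
    simp only [hA0def, hA1def, hBdef, Set.mem_preimage, Set.mem_singleton_iff,
      Set.mem_union, Set.mem_setOf_eq]
    constructor
    · intro h0
      rcases hS1 ω with h | h
      · exact Or.inr ⟨h0, h⟩
      · exact Or.inl h
    · rintro (h | ⟨h, _⟩)
      · rcases hS0 ω with h0 | h0
        · rw [h, h0] at hm; linarith
        · exact h0
      · exact h
  have hmeasA0 : μ A0 = μ A1 + μ B := by
    rw [measure_congr hA0ae, measure_union hdisj mB]
  have hp0sum : p0 = p1 + pB := by
    rw [hp0def, hmeasA0, ENNReal.toReal_add (measure_ne_top μ _) (measure_ne_top μ _)]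
  -- integral decomposition
  have hIdecomp : (∫ ω in A0, Y1 ω ∂μ) = (∫ ω in A1, Y1 ω ∂μ) + (∫ ω in B, Y1 ω ∂μ) := by
    rw [setIntegral_congr_set hA0ae,
      setIntegral_union hdisj mB hint.integrableOn hint.integrableOn]
  -- key independence integral
  have hXind : IndepFun (fun ω => if Z ω = 1 then (1:ℝ) else 0)
      (fun ω => if S1 ω = 1 then Y1 ω else 0) μ := by
    have hf : Measurable (fun x : ℝ => if x = 1 then (1:ℝ) else 0) :=
      Measurable.ite (measurableSet_eq) measurable_const measurable_const
    have hg : Measurable (fun p : ℝ × ℝ × ℝ => if p.2.1 = 1 then p.2.2 else 0) :=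
      Measurable.ite hT1 (measurable_snd.comp measurable_snd) measurable_const
    exact hindep.comp hf hg
  have hXeq : (fun ω => if Z ω = 1 then (1:ℝ) else 0) = Z1.indicator (fun _ => (1:ℝ)) := by
    funext ω
    by_cases h : Z ω = 1 <;> simp [Set.indicator, hZ1def, h]
  have hVeq : (fun ω => if S1 ω = 1 then Y1 ω else 0) = A1.indicator Y1 := by
    funext ω
    by_cases h : S1 ω = 1 <;> simp [Set.indicator, hA1def, h]
  have hXint : Integrable (fun ω => if Z ω = 1 then (1:ℝ) else 0) μ := by
    rw [hXeq]; exact (integrable_const (1:ℝ)).indicator mZ1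
  have hVint : Integrable (fun ω => if S1 ω = 1 then Y1 ω else 0) μ := by
    rw [hVeq]; exact hint.indicator mA1
  have hprod : (fun ω => if Z ω = 1 then (1:ℝ) else 0) * (fun ω => if S1 ω = 1 then Y1 ω else 0)
      = (Z1 ∩ A1).indicator Y1 := by
    funext ω
    simp only [Pi.mul_apply, Set.indicator, Set.mem_inter_iff, hZ1def, hA1def,
      Set.mem_preimage, Set.mem_singleton_iff]
    by_cases h1 : Z ω = 1 <;> by_cases h2 : S1 ω = 1 <;> simp [h1, h2]
  have hkey : (∫ ω in Z1 ∩ A1, Y1 ω ∂μ) = q1 * (∫ ω in A1, Y1 ω ∂μ) := by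
    have h := hXind.integral_mul_eq_mul_integral hXint.aestronglyMeasurable hVint.aestronglyMeasurable
    rw [hprod, integral_indicator (mZ1.inter mA1)] at h
    rw [h, hXeq, hVeq, integral_indicator mZ1, integral_indicator mA1]
    simp [hq1def, Measure.real]
  -- numerator of doomed cexp
  have hYint : (∫ ω in {ω | Z ω = 1 ∧ S ω = 1}, Y ω ∂μ) = q1 * (∫ ω in A1, Y1 ω ∂μ) := by
    rw [← hkey, hset1']
    apply setIntegral_congr_fun (mZ1.inter mA1)
    intro ω hω
    exact hconsY ω hω.1
  -- put everything together
  set I1 : ℝ := ∫ ω in A1, Y1 ω ∂μ with hI1def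
  set IB : ℝ := ∫ ω in B, Y1 ω ∂μ with hIBdef
  have hPr1 : Pr μ {ω | Z ω = 1 ∧ S ω = 1} = q1 * p1 := by
    rw [Pr, hset1', hmu1, ENNReal.toReal_mul]
  have hA0set : {ω | S0 ω = 1} = A0 := rfl
  rw [cexp, cexp, cexp, hA0set, hIdecomp, hYint, hPr1, Pr, Pr, hρ1p, hρ0p, hp0sum]
  have h1 : (μ A0).toReal = p1 + pB := by rw [← hp0def]; exact hp0sum
  have h2 : (μ B).toReal = pB := rfl
  rw [h1, h2, ← hIBdef]
  have hsum : 0 < p1 + pB := by linarith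
  field_simp
  ring
end

section
/- Suppose a random variable W is a mixture: the conditional law of W given membership in a population equals q·(law of W in subgroup A) + (1−q)·(law of W in subgroup B), with 0 < q < 1, and W has a continuous distribution (no atoms). Let y_ℓ and y_u be the q-th and (1−q)-th quantiles of W. Then E[W | W < y_ℓ] ≤ E[W | subgroup A] ≤ E[W | W > y_u]. -/
open MeasureTheory ProbabilityTheory

lemma swap_integral_le
    {Ω : Type*} [MeasurableSpace Ω] (μ : Measure Ω) [IsFiniteMeasure μ]
    (W : Ω → ℝ) (hint : Integrable W μ) (A B : Set Ω)
    (hAm : MeasurableSet A) (hBm : MeasurableSet B) (c : ℝ)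
    (hμ : μ A = μ B) (hBle : ∀ ω ∈ B \ A, W ω ≤ c) (hAge : ∀ ω ∈ A \ B, c ≤ W ω) :
    ∫ ω in B, W ω ∂μ ≤ ∫ ω in A, W ω ∂μ := by
  have hdiff : μ (B \ A) = μ (A \ B) := by
    have h1 : μ (A \ B) + μ (A ∩ B) = μ A := measure_diff_add_inter A hBm
    have h2 : μ (B \ A) + μ (B ∩ A) = μ B := measure_diff_add_inter B hAm
    rw [Set.inter_comm] at h2
    have := h1.trans (hμ.trans h2.symm)
    exact (WithTop.add_right_cancel (measure_ne_top μ _) this.symm)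
  have hiB : ∫ ω in B, W ω ∂μ = (∫ ω in B ∩ A, W ω ∂μ) + ∫ ω in B \ A, W ω ∂μ := by
    rw [← setIntegral_union (Set.disjoint_sdiff_right.mono_left Set.inter_subset_right)
      (hBm.diff hAm) (hint.integrableOn) (hint.integrableOn), Set.inter_union_diff]
  have hiA : ∫ ω in A, W ω ∂μ = (∫ ω in B ∩ A, W ω ∂μ) + ∫ ω in A \ B, W ω ∂μ := by
    rw [← setIntegral_union (Set.disjoint_sdiff_right.mono_left Set.inter_subset_left)
      (hAm.diff hBm) (hint.integrableOn) (hint.integrableOn), Set.inter_comm,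
      Set.inter_union_diff]
  rw [hiA, hiB]
  refine add_le_add le_rfl ?_
  have h1 : ∫ ω in B \ A, W ω ∂μ ≤ ∫ _ω in B \ A, c ∂μ :=
    setIntegral_mono_on hint.integrableOn ((integrableOn_const (measure_ne_top μ _)))
      (hBm.diff hAm) hBle
  have h2 : ∫ _ω in A \ B, c ∂μ ≤ ∫ ω in A \ B, W ω ∂μ :=
    setIntegral_mono_on ((integrableOn_const (measure_ne_top μ _)))
      hint.integrableOn (hAm.diff hBm) hAge
  refine h1.trans (le_trans ?_ h2)
  simp [Measure.real, hdiff]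

/-- Trimmed-mean bound: the mean of `W` on any event of probability `q` lies between the mean
of the lowest `q`-fraction and the mean of the highest `q`-fraction of `W`. -/
theorem trimmed_mean_bound
    {Ω : Type*} [MeasurableSpace Ω] (μ : Measure Ω) [IsProbabilityMeasure μ]
    (W : Ω → ℝ) (A : Set Ω) (q yl yu : ℝ)
    (hWm : Measurable W) (hA : MeasurableSet A) (hint : Integrable W μ)
    (hq : Pr μ A = q) (hq0 : 0 < q) (hq1 : q < 1)
    (hatomless : ∀ y : ℝ, μ {ω | W ω = y} = 0)
    (hyl : Pr μ {ω | W ω < yl} = q)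
    (hyu : Pr μ {ω | W ω > yu} = q) :
    cexp μ W {ω | W ω < yl} ≤ cexp μ W A ∧ cexp μ W A ≤ cexp μ W {ω | W ω > yu} := by
  have hLm : MeasurableSet {ω | W ω < yl} := hWm measurableSet_Iio
  have hUm : MeasurableSet {ω | W ω > yu} := hWm measurableSet_Ioi
  have htoReal : ∀ S T : Set Ω, Pr μ S = Pr μ T → μ S = μ T := fun S T h =>
    (ENNReal.toReal_eq_toReal_iff' (measure_ne_top μ _) (measure_ne_top μ _)).1 h
  have hμL : μ A = μ {ω | W ω < yl} := htoReal _ _ (by rw [hq, hyl])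
  have hμU : μ {ω | W ω > yu} = μ A := htoReal _ _ (by rw [hq, hyu])
  have hlow : ∫ ω in {ω | W ω < yl}, W ω ∂μ ≤ ∫ ω in A, W ω ∂μ := by
    apply swap_integral_le μ W hint A _ hA hLm yl hμL
    · intro ω hω; exact (hω.1 : W ω < yl).le
    · intro ω hω; exact le_of_not_gt hω.2
  have hhigh : ∫ ω in A, W ω ∂μ ≤ ∫ ω in {ω | W ω > yu}, W ω ∂μ := by
    apply swap_integral_le μ W hint _ A hUm hA yu hμU
    · intro ω hω; exact le_of_not_gt hω.2
    · intro ω hω; exact (hω.1 : yu < W ω).le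
  have hPrL : Pr μ {ω | W ω < yl} = q := hyl
  constructor
  · rw [cexp, cexp, hq, hyl]
    exact div_le_div_of_nonneg_right hlow hq0.le
  · rw [cexp, cexp, hq, hyu]
    exact div_le_div_of_nonneg_right hhigh hq0.le
end

section
/- Under randomization, consistency, monotonicity, and the exclusion restriction P(Y(1,s=0) = Y(0,s=0)) = 1 on the Immune stratum, we have E[Y(1) | S(0)=1, S(1)=0] = [μ̄_10·(1 − ρ̄_1) − μ̄_00·(1 − ρ̄_0)] / (ρ̄_0 − ρ̄_1), where μ̄_zs = E[Y | Z=z, S=s] and ρ̄_z = P(S=1 | Z=z), provided ρ̄_0 > ρ̄_1 and all conditioning events have positive probability. -/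
open MeasureTheory ProbabilityTheory

lemma indep_setIntegral {Ω β : Type*} [MeasurableSpace Ω] [MeasurableSpace β]
    (μ : Measure Ω) [IsProbabilityMeasure μ] {Z : Ω → ℝ} {W : Ω → β}
    (hZm : Measurable Z) (hindep : IndepFun Z W μ)
    {s : Set ℝ} (hs : MeasurableSet s) {g : β → ℝ} (hg : Measurable g)
    (hgi : Integrable (fun ω => g (W ω)) μ) :
    ∫ ω in Z ⁻¹' s, g (W ω) ∂μ = (μ (Z ⁻¹' s)).toReal * ∫ ω, g (W ω) ∂μ := by
  have hmeas : MeasurableSet (Z ⁻¹' s) := hZm hs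
  rw [← integral_indicator hmeas]
  have h1 : (fun ω => (Z ⁻¹' s).indicator (fun ω => g (W ω)) ω)
      = (fun ω => s.indicator (fun _ => (1:ℝ)) (Z ω) * g (W ω)) := by
    funext ω; by_cases h : Z ω ∈ s <;> simp [Set.indicator, h]
  have h2 : (fun ω => s.indicator (fun _ => (1:ℝ)) (Z ω))
      = (Z ⁻¹' s).indicator (fun _ => (1:ℝ)) := by
    funext ω; by_cases h : Z ω ∈ s <;> simp [Set.indicator, h]
  have hind2 : IndepFun (fun ω => s.indicator (fun _ => (1:ℝ)) (Z ω)) (fun ω => g (W ω)) μ :=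
    hindep.comp (measurable_const.indicator hs) hg
  have hint1 : Integrable (fun ω => s.indicator (fun _ => (1:ℝ)) (Z ω)) μ := by
    rw [h2]; exact (integrable_const 1).indicator hmeas
  have hmul := hind2.integral_fun_mul_eq_mul_integral hint1.aestronglyMeasurable hgi.aestronglyMeasurable
  calc ∫ ω, (Z ⁻¹' s).indicator (fun ω => g (W ω)) ω ∂μ
      = ∫ ω, s.indicator (fun _ => (1:ℝ)) (Z ω) * g (W ω) ∂μ := by rw [h1]
    _ = (∫ ω, s.indicator (fun _ => (1:ℝ)) (Z ω) ∂μ) * ∫ ω, g (W ω) ∂μ := hmul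
    _ = (μ (Z ⁻¹' s)).toReal * ∫ ω, g (W ω) ∂μ := by
        rw [h2, integral_indicator_const (1:ℝ) hmeas]; simp [Measure.real]

/-- Identification of the Protected-stratum mean under vaccine via the exclusion restriction. -/
theorem id_protected_mean_ER
    {Ω : Type*} [MeasurableSpace Ω] (μ : Measure Ω) [IsProbabilityMeasure μ]
    (Z S0 S1 Y0 Y1 S Y : Ω → ℝ) (ρ0 ρ1 m10 m00 : ℝ)
    (hZm : Measurable Z) (hS0m : Measurable S0) (hS1m : Measurable S1)
    (hY0m : Measurable Y0) (hY1m : Measurable Y1)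
    (hZ : ∀ ω, Z ω = 0 ∨ Z ω = 1)
    (hS0 : ∀ ω, S0 ω = 0 ∨ S0 ω = 1) (hS1 : ∀ ω, S1 ω = 0 ∨ S1 ω = 1)
    (hindep : IndepFun Z (fun ω => (S0 ω, S1 ω, Y0 ω, Y1 ω)) μ)
    (hconsS : ∀ ω, S ω = if Z ω = 1 then S1 ω else S0 ω)
    (hconsY : ∀ ω, Y ω = if Z ω = 1 then Y1 ω else Y0 ω)
    (hmono : ∀ᵐ ω ∂μ, S1 ω ≤ S0 ω)
    (hER : ∀ᵐ ω ∂μ, (S1 ω = 0 ∧ S0 ω = 0) → Y1 ω = Y0 ω)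
    (hint0 : Integrable Y0 μ) (hint1 : Integrable Y1 μ)
    (hρ0 : ρ0 = Pr μ {ω | S ω = 1 ∧ Z ω = 0} / Pr μ {ω | Z ω = 0})
    (hρ1 : ρ1 = Pr μ {ω | S ω = 1 ∧ Z ω = 1} / Pr μ {ω | Z ω = 1})
    (hm10 : m10 = cexp μ Y {ω | Z ω = 1 ∧ S ω = 0})
    (hm00 : m00 = cexp μ Y {ω | Z ω = 0 ∧ S ω = 0})
    (hpos : ∀ z s : ℝ, (z = 0 ∨ z = 1) → (s = 0 ∨ s = 1) →
      0 < Pr μ {ω | Z ω = z ∧ S ω = s})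
    (hposP : 0 < Pr μ {ω | S0 ω = 1 ∧ S1 ω = 0})
    (hlt : ρ1 < ρ0) :
    cexp μ Y1 {ω | S0 ω = 1 ∧ S1 ω = 0}
      = (m10 * (1 - ρ1) - m00 * (1 - ρ0)) / (ρ0 - ρ1) := by
  classical
  set W : Ω → ℝ × ℝ × ℝ × ℝ := fun ω => (S0 ω, S1 ω, Y0 ω, Y1 ω) with hWdef
  have hWm : Measurable W := hS0m.prodMk (hS1m.prodMk (hY0m.prodMk hY1m))
  -- measurable target sets
  set t10 : Set (ℝ × ℝ × ℝ × ℝ) := {p | p.2.1 = 0} with ht10def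
  set t11 : Set (ℝ × ℝ × ℝ × ℝ) := {p | p.2.1 = 1} with ht11def
  set t00 : Set (ℝ × ℝ × ℝ × ℝ) := {p | p.1 = 0} with ht00def
  set t01 : Set (ℝ × ℝ × ℝ × ℝ) := {p | p.1 = 1} with ht01def
  have ht10 : MeasurableSet t10 := (measurable_fst.comp measurable_snd) (measurableSet_singleton 0)
  have ht11 : MeasurableSet t11 := (measurable_fst.comp measurable_snd) (measurableSet_singleton 1)
  have ht00 : MeasurableSet t00 := measurable_fst (measurableSet_singleton 0)
  have ht01 : MeasurableSet t01 := measurable_fst (measurableSet_singleton 1)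
  have hW10 : W ⁻¹' t10 = S1 ⁻¹' {0} := rfl
  have hW11 : W ⁻¹' t11 = S1 ⁻¹' {1} := rfl
  have hW00 : W ⁻¹' t00 = S0 ⁻¹' {0} := rfl
  have hW01 : W ⁻¹' t01 = S0 ⁻¹' {1} := rfl
  have hA1m : MeasurableSet (S1 ⁻¹' ({0} : Set ℝ)) := hS1m (measurableSet_singleton 0)
  have hA0m : MeasurableSet (S0 ⁻¹' ({0} : Set ℝ)) := hS0m (measurableSet_singleton 0)
  have hZ1m : MeasurableSet (Z ⁻¹' ({1} : Set ℝ)) := hZm (measurableSet_singleton 1)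
  have hZ0m : MeasurableSet (Z ⁻¹' ({0} : Set ℝ)) := hZm (measurableSet_singleton 0)
  -- real quantities
  set pZ1 : ℝ := (μ (Z ⁻¹' {1})).toReal with hpZ1def
  set pZ0 : ℝ := (μ (Z ⁻¹' {0})).toReal with hpZ0def
  set q1 : ℝ := (μ (S1 ⁻¹' {0})).toReal with hq1def
  set q0 : ℝ := (μ (S0 ⁻¹' {0})).toReal with hq0def
  set r1 : ℝ := (μ (S1 ⁻¹' {1})).toReal with hr1def
  set r0 : ℝ := (μ (S0 ⁻¹' {1})).toReal with hr0def
  set I1 : ℝ := ∫ ω in S1 ⁻¹' {0}, Y1 ω ∂μ with hI1def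
  set I0 : ℝ := ∫ ω in S0 ⁻¹' {0}, Y0 ω ∂μ with hI0def
  set B : Set Ω := {ω | S0 ω = 1 ∧ S1 ω = 0} with hBdef
  have hBeq : B = S0 ⁻¹' {1} ∩ S1 ⁻¹' {0} := by ext ω; simp [hBdef]
  have hBm : MeasurableSet B := by
    rw [hBeq]; exact (hS0m (measurableSet_singleton 1)).inter hA1m
  -- set identities using consistency
  have hZne : ∀ ω, Z ω = 0 → Z ω ≠ 1 := by intro ω h; rw [h]; norm_num
  have hset10 : {ω | Z ω = 1 ∧ S ω = 0} = Z ⁻¹' {1} ∩ W ⁻¹' t10 := by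
    ext ω
    constructor <;> rintro ⟨h1, h2⟩ <;> refine ⟨h1, ?_⟩
    · show S1 ω = 0; simpa [hconsS ω, Set.mem_singleton_iff.mp h1] using h2
    · show S ω = 0
      have h1' : Z ω = 1 := h1
      simpa [hconsS ω, h1'] using (show S1 ω = 0 from h2)
  have hset00 : {ω | Z ω = 0 ∧ S ω = 0} = Z ⁻¹' {0} ∩ W ⁻¹' t00 := by
    ext ω
    constructor <;> rintro ⟨h1, h2⟩ <;> refine ⟨h1, ?_⟩
    · show S0 ω = 0; simpa [hconsS ω, hZne ω h1] using h2
    · show S ω = 0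
      have h1' : Z ω = (0:ℝ) := h1
      simpa [hconsS ω, hZne ω h1'] using (show S0 ω = 0 from h2)
  have hset11 : {ω | S ω = 1 ∧ Z ω = 1} = Z ⁻¹' {1} ∩ W ⁻¹' t11 := by
    ext ω
    constructor
    · rintro ⟨h2, h1⟩; exact ⟨h1, show S1 ω = 1 by simpa [hconsS ω, h1] using h2⟩
    · rintro ⟨h1, h2⟩
      have h1' : Z ω = (1:ℝ) := h1
      exact ⟨by simpa [hconsS ω, h1'] using (show S1 ω = 1 from h2), h1⟩
  have hset01 : {ω | S ω = 1 ∧ Z ω = 0} = Z ⁻¹' {0} ∩ W ⁻¹' t01 := by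
    ext ω
    constructor
    · rintro ⟨h2, h1⟩; exact ⟨h1, show S0 ω = 1 by simpa [hconsS ω, hZne ω h1] using h2⟩
    · rintro ⟨h1, h2⟩
      have h1' : Z ω = (0:ℝ) := h1
      exact ⟨by simpa [hconsS ω, hZne ω h1'] using (show S0 ω = 1 from h2), h1⟩
  have hsetZ1 : {ω | Z ω = 1} = Z ⁻¹' ({1} : Set ℝ) := rfl
  have hsetZ0 : {ω | Z ω = 0} = Z ⁻¹' ({0} : Set ℝ) := rfl
  -- products of measures
  have hprod : ∀ (s t : Set ℝ) (ts : Set (ℝ × ℝ × ℝ × ℝ)), MeasurableSet s → MeasurableSet ts →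
      W ⁻¹' ts = (fun _ => (0:ℝ)) ⁻¹' t → True := fun _ _ _ _ _ _ => trivial
  have hmul10 : (μ (Z ⁻¹' {1} ∩ W ⁻¹' t10)).toReal = pZ1 * q1 := by
    rw [hindep.measure_inter_preimage_eq_mul _ _ (measurableSet_singleton 1) ht10,
      ENNReal.toReal_mul, hW10]
  have hmul11 : (μ (Z ⁻¹' {1} ∩ W ⁻¹' t11)).toReal = pZ1 * r1 := by
    rw [hindep.measure_inter_preimage_eq_mul _ _ (measurableSet_singleton 1) ht11,
      ENNReal.toReal_mul, hW11]
  have hmul00 : (μ (Z ⁻¹' {0} ∩ W ⁻¹' t00)).toReal = pZ0 * q0 := by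
    rw [hindep.measure_inter_preimage_eq_mul _ _ (measurableSet_singleton 0) ht00,
      ENNReal.toReal_mul, hW00]
  have hmul01 : (μ (Z ⁻¹' {0} ∩ W ⁻¹' t01)).toReal = pZ0 * r0 := by
    rw [hindep.measure_inter_preimage_eq_mul _ _ (measurableSet_singleton 0) ht01,
      ENNReal.toReal_mul, hW01]
  -- positivity
  have hpos10 := hpos 1 0 (Or.inr rfl) (Or.inl rfl)
  have hpos00 := hpos 0 0 (Or.inl rfl) (Or.inl rfl)
  rw [show Pr μ {ω | Z ω = 1 ∧ S ω = 0} = pZ1 * q1 from by rw [Pr, hset10]; exact hmul10] at hpos10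
  rw [show Pr μ {ω | Z ω = 0 ∧ S ω = 0} = pZ0 * q0 from by rw [Pr, hset00]; exact hmul00] at hpos00
  have hpZ1 : 0 < pZ1 := by
    rcases mul_pos_iff.1 hpos10 with ⟨h, _⟩ | ⟨h, h'⟩
    · exact h
    · exact absurd h (not_lt.2 ENNReal.toReal_nonneg)
  have hq1pos : 0 < q1 := by
    rcases mul_pos_iff.1 hpos10 with ⟨_, h⟩ | ⟨h, h'⟩
    · exact h
    · exact absurd h (not_lt.2 ENNReal.toReal_nonneg)
  have hpZ0 : 0 < pZ0 := by
    rcases mul_pos_iff.1 hpos00 with ⟨h, _⟩ | ⟨h, h'⟩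
    · exact h
    · exact absurd h (not_lt.2 ENNReal.toReal_nonneg)
  have hq0pos : 0 < q0 := by
    rcases mul_pos_iff.1 hpos00 with ⟨_, h⟩ | ⟨h, h'⟩
    · exact h
    · exact absurd h (not_lt.2 ENNReal.toReal_nonneg)
  -- ρ1 = r1, ρ0 = r0
  have hρ1' : ρ1 = r1 := by
    rw [hρ1, Pr, Pr, hset11, hsetZ1, hmul11]
    field_simp
    exact mul_div_cancel_left₀ r1 (ne_of_gt hpZ1)
  have hρ0' : ρ0 = r0 := by
    rw [hρ0, Pr, Pr, hset01, hsetZ0, hmul01]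
    field_simp
    exact mul_div_cancel_left₀ r0 (ne_of_gt hpZ0)
  -- q + r = 1
  have hsum : ∀ (T : Ω → ℝ), Measurable T → (∀ ω, T ω = 0 ∨ T ω = 1) →
      (μ (T ⁻¹' {0})).toReal + (μ (T ⁻¹' {1})).toReal = 1 := by
    intro T hTm hT01
    have hdisj : Disjoint (T ⁻¹' ({0}:Set ℝ)) (T ⁻¹' ({1}:Set ℝ)) := by
      rw [Set.disjoint_left]
      intro ω h0 h1
      have : T ω = 0 := h0
      have : T ω = 1 := h1
      simp_all
    have huniv : T ⁻¹' ({0}:Set ℝ) ∪ T ⁻¹' ({1}:Set ℝ) = Set.univ := by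
      ext ω; simpa using hT01 ω
    have := measure_union (μ := μ) hdisj (hTm (measurableSet_singleton 1))
    rw [huniv, measure_univ] at this
    rw [← ENNReal.toReal_add (measure_ne_top μ _) (measure_ne_top μ _), ← this]
    simp
  have hq1r1 : q1 + r1 = 1 := hsum S1 hS1m hS1
  have hq0r0 : q0 + r0 = 1 := hsum S0 hS0m hS0
  have hq1eq : q1 = 1 - ρ1 := by rw [hρ1']; linarith
  have hq0eq : q0 = 1 - ρ0 := by rw [hρ0']; linarith
  -- integrals of Y over (z, s=0) cells
  set g1 : ℝ × ℝ × ℝ × ℝ → ℝ := t10.indicator (fun p => p.2.2.2) with hg1def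
  set g0 : ℝ × ℝ × ℝ × ℝ → ℝ := t00.indicator (fun p => p.2.2.1) with hg0def
  have hg1m : Measurable g1 := (measurable_snd.comp (measurable_snd.comp measurable_snd)).indicator ht10
  have hg0m : Measurable g0 := (measurable_fst.comp (measurable_snd.comp measurable_snd)).indicator ht00
  have hg1W : (fun ω => g1 (W ω)) = (S1 ⁻¹' {0}).indicator Y1 := by
    funext ω; by_cases h : S1 ω = 0
    · have hmem : W ω ∈ t10 := h
      have hmem' : ω ∈ S1 ⁻¹' ({0}:Set ℝ) := h
      simp [hg1def, Set.indicator_of_mem hmem, Set.indicator_of_mem hmem']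
      rfl
    · have hmem : W ω ∉ t10 := h
      have hmem' : ω ∉ S1 ⁻¹' ({0}:Set ℝ) := h
      simp [hg1def, Set.indicator_of_notMem hmem, Set.indicator_of_notMem hmem']
  have hg0W : (fun ω => g0 (W ω)) = (S0 ⁻¹' {0}).indicator Y0 := by
    funext ω; by_cases h : S0 ω = 0
    · have hmem : W ω ∈ t00 := h
      have hmem' : ω ∈ S0 ⁻¹' ({0}:Set ℝ) := h
      simp [hg0def, Set.indicator_of_mem hmem, Set.indicator_of_mem hmem']
      rfl
    · have hmem : W ω ∉ t00 := h
      have hmem' : ω ∉ S0 ⁻¹' ({0}:Set ℝ) := h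
      simp [hg0def, Set.indicator_of_notMem hmem, Set.indicator_of_notMem hmem']
  have hg1i : Integrable (fun ω => g1 (W ω)) μ := by rw [hg1W]; exact hint1.indicator hA1m
  have hg0i : Integrable (fun ω => g0 (W ω)) μ := by rw [hg0W]; exact hint0.indicator hA0m
  have hI10 : ∫ ω in Z ⁻¹' {1} ∩ W ⁻¹' t10, Y1 ω ∂μ = pZ1 * I1 := by
    have h1 := indep_setIntegral μ hZm hindep (measurableSet_singleton 1) hg1m hg1i
    rw [hg1W, setIntegral_indicator hA1m, integral_indicator hA1m] at h1
    rw [hW10]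
    exact h1
  have hI00 : ∫ ω in Z ⁻¹' {0} ∩ W ⁻¹' t00, Y0 ω ∂μ = pZ0 * I0 := by
    have h1 := indep_setIntegral μ hZm hindep (measurableSet_singleton 0) hg0m hg0i
    rw [hg0W, setIntegral_indicator hA0m, integral_indicator hA0m] at h1
    rw [hW00]
    exact h1
  -- Y = Y1 on {Z=1}, Y = Y0 on {Z=0}
  have hYint10 : ∫ ω in {ω | Z ω = 1 ∧ S ω = 0}, Y ω ∂μ = pZ1 * I1 := by
    rw [hset10, ← hI10]
    apply setIntegral_congr_fun ((hZm (measurableSet_singleton 1)).inter (hWm ht10))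
    intro ω hω
    have h1 : Z ω = 1 := hω.1
    simp [hconsY ω, h1]
  have hYint00 : ∫ ω in {ω | Z ω = 0 ∧ S ω = 0}, Y ω ∂μ = pZ0 * I0 := by
    rw [hset00, ← hI00]
    apply setIntegral_congr_fun ((hZm (measurableSet_singleton 0)).inter (hWm ht00))
    intro ω hω
    have h1 : Z ω = (0:ℝ) := hω.1
    simp [hconsY ω, hZne ω h1]
  -- m10, m00
  have hm10' : m10 * (1 - ρ1) = I1 := by
    rw [hm10, cexp, hYint10, ← hq1eq,
      show Pr μ {ω | Z ω = 1 ∧ S ω = 0} = pZ1 * q1 from by rw [Pr, hset10]; exact hmul10,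
      ]
    have h1 : pZ1 ≠ 0 := ne_of_gt hpZ1
    have h2 : q1 ≠ 0 := ne_of_gt hq1pos
    field_simp
  have hm00' : m00 * (1 - ρ0) = I0 := by
    rw [hm00, cexp, hYint00, ← hq0eq,
      show Pr μ {ω | Z ω = 0 ∧ S ω = 0} = pZ0 * q0 from by rw [Pr, hset00]; exact hmul00,
      ]
    have h1 : pZ0 ≠ 0 := ne_of_gt hpZ0
    have h2 : q0 ≠ 0 := ne_of_gt hq0pos
    field_simp
  -- decomposition of {S1 = 0}
  set C : Set Ω := S0 ⁻¹' {0} ∩ S1 ⁻¹' {0} with hCdef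
  have hCm : MeasurableSet C := hA0m.inter hA1m
  have hdecomp : S1 ⁻¹' ({0}:Set ℝ) = C ∪ B := by
    ext ω
    simp only [hCdef, hBeq, Set.mem_union, Set.mem_inter_iff, Set.mem_preimage,
      Set.mem_singleton_iff]
    rcases hS0 ω with h | h <;> simp [h] <;> tauto
  have hdisjCB : Disjoint C B := by
    rw [Set.disjoint_left]
    rintro ω ⟨h0, _⟩ hB
    rw [hBeq] at hB
    have h1' : S0 ω = 1 := hB.1
    have h0' : S0 ω = 0 := h0
    rw [h0'] at h1'
    norm_num at h1'
  have hCae : C =ᵐ[μ] S0 ⁻¹' ({0}:Set ℝ) := by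
    rw [Filter.eventuallyEq_set]
    filter_upwards [hmono] with ω hω
    simp only [hCdef, Set.mem_inter_iff, Set.mem_preimage, Set.mem_singleton_iff]
    constructor
    · rintro ⟨h, _⟩; exact h
    · intro h
      refine ⟨h, ?_⟩
      rcases hS1 ω with h1 | h1
      · exact h1
      · rw [h, h1] at hω; linarith
  -- measure decomposition
  have hmeasdec : q1 = q0 + (μ B).toReal := by
    have h1 : μ (S1 ⁻¹' ({0}:Set ℝ)) = μ C + μ B := by
      rw [hdecomp]; exact measure_union hdisjCB hBm
    have h2 : μ C = μ (S0 ⁻¹' ({0}:Set ℝ)) := measure_congr hCae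
    rw [hq1def, hq0def, h1, h2, ENNReal.toReal_add (measure_ne_top μ _) (measure_ne_top μ _)]
  have hpB : (μ B).toReal = ρ0 - ρ1 := by
    have : q1 - q0 = (μ B).toReal := by linarith
    rw [← this, hq1eq, hq0eq]; ring
  -- integral decomposition
  have hintdec : I1 = I0 + ∫ ω in B, Y1 ω ∂μ := by
    have h1 : I1 = (∫ ω in C, Y1 ω ∂μ) + ∫ ω in B, Y1 ω ∂μ := by
      rw [hI1def, hdecomp]
      exact setIntegral_union hdisjCB hBm hint1.integrableOn hint1.integrableOn
    have h2 : ∫ ω in C, Y1 ω ∂μ = ∫ ω in C, Y0 ω ∂μ := by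
      apply setIntegral_congr_ae hCm
      filter_upwards [hER] with ω hω hmem
      exact hω ⟨hmem.2, hmem.1⟩
    have h3 : ∫ ω in C, Y0 ω ∂μ = I0 := setIntegral_congr_set hCae
    rw [h1, h2, h3]
  -- conclude
  rw [cexp, Pr, hpB, hm10', hm00', hintdec]
  ring_nf
end

section
/- Under randomization, consistency, monotonicity, and the exclusion restriction, E[Y(1) | S(0)=1] = (E[Y | Z=1] − E[Y | Z=0, S=0]·(1 − ρ̄_0)) / ρ̄_0, where ρ̄_0 = P(S=1 | Z=0). -/
open MeasureTheory ProbabilityTheory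

private lemma helper_int {Ω : Type*} [MeasurableSpace Ω] (μ : Measure Ω) [IsProbabilityMeasure μ]
    (Z : Ω → ℝ) (W : Ω → ℝ × ℝ × ℝ × ℝ) (hZm : Measurable Z)
    (hindep : IndepFun Z W μ) (h : ℝ × ℝ × ℝ × ℝ → ℝ) (hh : Measurable h)
    (hint : Integrable (fun ω => h (W ω)) μ) (z : ℝ) :
    ∫ ω in Z ⁻¹' {z}, h (W ω) ∂μ = (μ (Z ⁻¹' {z})).toReal * ∫ ω, h (W ω) ∂μ := by
  have hA : MeasurableSet (Z ⁻¹' {z}) := hZm (measurableSet_singleton z)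
  set g : ℝ → ℝ := Set.indicator {z} (fun _ => 1) with hg
  have hgm : Measurable g := measurable_const.indicator (measurableSet_singleton z)
  have hgZ : (fun ω => g (Z ω)) = Set.indicator (Z ⁻¹' {z}) (fun _ => (1:ℝ)) := by
    ext ω
    by_cases hzy : Z ω = z <;> simp [hg, Set.indicator, hzy]
  have hgint : Integrable (fun ω => g (Z ω)) μ := by
    rw [hgZ]; exact (integrable_const 1).indicator hA
  have hindep2 : IndepFun (fun ω => g (Z ω)) (fun ω => h (W ω)) μ := hindep.comp hgm hh
  have key : ∫ ω, g (Z ω) * h (W ω) ∂μ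
      = (∫ ω, g (Z ω) ∂μ) * ∫ ω, h (W ω) ∂μ :=
    hindep2.integral_fun_mul_eq_mul_integral hgint.aestronglyMeasurable hint.aestronglyMeasurable
  have h1 : ∫ ω in Z ⁻¹' {z}, h (W ω) ∂μ = ∫ ω, g (Z ω) * h (W ω) ∂μ := by
    rw [← integral_indicator hA]
    congr 1
    ext ω
    by_cases hzy : Z ω = z <;> simp [hg, Set.indicator, hzy]
  have h2 : ∫ ω, g (Z ω) ∂μ = (μ (Z ⁻¹' {z})).toReal := by
    rw [hgZ, integral_indicator hA]
    simp
    rfl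
  rw [h1, key, h2]

/-- Identification of the Naturally Infected mean under vaccine via the exclusion
restriction: `E[Y(1) | S(0)=1] = (E[Y | Z=1] - E[Y | Z=0, S=0](1 - ρ̄₀)) / ρ̄₀`. -/
theorem id_EY1_naturally_infected_ER
    {Ω : Type*} [MeasurableSpace Ω] (μ : Measure Ω) [IsProbabilityMeasure μ]
    (Z S0 S1 Y0 Y1 S Y : Ω → ℝ) (ρ0 : ℝ)
    (hZm : Measurable Z) (hS0m : Measurable S0) (hS1m : Measurable S1)
    (hY0m : Measurable Y0) (hY1m : Measurable Y1)
    (hZ : ∀ ω, Z ω = 0 ∨ Z ω = 1)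
    (hS0 : ∀ ω, S0 ω = 0 ∨ S0 ω = 1) (hS1 : ∀ ω, S1 ω = 0 ∨ S1 ω = 1)
    (hindep : IndepFun Z (fun ω => (S0 ω, S1 ω, Y0 ω, Y1 ω)) μ)
    (hconsS : ∀ ω, S ω = if Z ω = 1 then S1 ω else S0 ω)
    (hconsY : ∀ ω, Y ω = if Z ω = 1 then Y1 ω else Y0 ω)
    (hmono : ∀ᵐ ω ∂μ, S1 ω ≤ S0 ω)
    (hER : ∀ᵐ ω ∂μ, (S0 ω = 0 ∧ S1 ω = 0) → Y1 ω = Y0 ω)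
    (hint0 : Integrable Y0 μ) (hint1 : Integrable Y1 μ)
    (hρ0 : ρ0 = Pr μ {ω | S ω = 1 ∧ Z ω = 0} / Pr μ {ω | Z ω = 0})
    (hpos0 : 0 < Pr μ {ω | Z ω = 0}) (hpos1 : 0 < Pr μ {ω | Z ω = 1})
    (hρ0pos : 0 < ρ0)
    (hpos00 : 0 < Pr μ {ω | Z ω = 0 ∧ S ω = 0}) :
    cexp μ Y1 {ω | S0 ω = 1}
      = (cexp μ Y {ω | Z ω = 1} - cexp μ Y {ω | Z ω = 0 ∧ S ω = 0} * (1 - ρ0)) / ρ0 := by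
  classical
  set W : Ω → ℝ × ℝ × ℝ × ℝ := fun ω => (S0 ω, S1 ω, Y0 ω, Y1 ω) with hW
  have hWm : Measurable W := ((hS0m.prodMk (hS1m.prodMk (hY0m.prodMk hY1m))))
  set A0 : Set Ω := Z ⁻¹' {0} with hA0def
  set A1 : Set Ω := Z ⁻¹' {1} with hA1def
  set B0 : Set Ω := S0 ⁻¹' {0} with hB0def
  set B1 : Set Ω := S0 ⁻¹' {1} with hB1def
  have hA0m : MeasurableSet A0 := hZm (measurableSet_singleton 0)
  have hA1m : MeasurableSet A1 := hZm (measurableSet_singleton 1)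
  have hB0m : MeasurableSet B0 := hS0m (measurableSet_singleton 0)
  have hB1m : MeasurableSet B1 := hS0m (measurableSet_singleton 1)
  have hA1eq : {ω | Z ω = 1} = A1 := rfl
  have hA0eq : {ω | Z ω = 0} = A0 := rfl
  have hB1eq : {ω | S0 ω = 1} = B1 := rfl
  -- real-number probabilities
  set pA0 : ℝ := (μ A0).toReal with hpA0
  set pA1 : ℝ := (μ A1).toReal with hpA1
  set pB0 : ℝ := (μ B0).toReal with hpB0
  set pB1 : ℝ := (μ B1).toReal with hpB1
  have hpA0pos : 0 < pA0 := hpos0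
  have hpA1pos : 0 < pA1 := hpos1
  -- {Z=0} means Z ≠ 1
  have hZne : ∀ ω, Z ω = 0 → ¬ (Z ω = 1) := by
    intro ω h0 h1; rw [h0] at h1; norm_num at h1
  -- Step 1: cexp μ Y {Z=1} = ∫ Y1
  have hY1W : (fun ω => (fun p : ℝ × ℝ × ℝ × ℝ => p.2.2.2) (W ω)) = Y1 := rfl
  have step1int : ∫ ω in A1, Y ω ∂μ = pA1 * ∫ ω, Y1 ω ∂μ := by
    have e1 : ∫ ω in A1, Y ω ∂μ = ∫ ω in A1, Y1 ω ∂μ := by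
      refine setIntegral_congr_fun hA1m ?_
      intro ω hω
      simp only [hA1def, Set.mem_preimage, Set.mem_singleton_iff] at hω
      rw [hconsY ω, if_pos hω]
    rw [e1]
    have := helper_int μ Z W hZm hindep (fun p => p.2.2.2) (by fun_prop) (by rw [hY1W]; exact hint1) 1
    rw [hY1W] at this
    exact this
  have step1 : cexp μ Y {ω | Z ω = 1} = ∫ ω, Y1 ω ∂μ := by
    rw [cexp, hA1eq, step1int]
    show pA1 * _ / pA1 = _
    field_simp
  -- Step 2: the set {Z=0 ∧ S=0}
  have hset00 : {ω | Z ω = 0 ∧ S ω = 0} = A0 ∩ B0 := by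
    ext ω
    simp only [Set.mem_setOf_eq, Set.mem_inter_iff, hA0def, hB0def, Set.mem_preimage,
      Set.mem_singleton_iff]
    constructor
    · rintro ⟨h0, hs⟩
      rw [hconsS ω, if_neg (hZne ω h0)] at hs
      exact ⟨h0, hs⟩
    · rintro ⟨h0, hs⟩
      exact ⟨h0, by rw [hconsS ω, if_neg (hZne ω h0)]; exact hs⟩
  have hmul00 : μ (A0 ∩ B0) = μ A0 * μ B0 := by
    have := hindep.measure_inter_preimage_eq_mul {(0:ℝ)} (Prod.fst ⁻¹' {(0:ℝ)})
      (measurableSet_singleton 0) (measurable_fst (measurableSet_singleton 0))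
    exact this
  have hmul01 : μ (A0 ∩ B1) = μ A0 * μ B1 := by
    have := hindep.measure_inter_preimage_eq_mul {(0:ℝ)} (Prod.fst ⁻¹' {(1:ℝ)})
      (measurableSet_singleton 0) (measurable_fst (measurableSet_singleton 1))
    exact this
  have hPr00 : Pr μ {ω | Z ω = 0 ∧ S ω = 0} = pA0 * pB0 := by
    rw [Pr, hset00, hmul00, ENNReal.toReal_mul]
  have hpB0pos : 0 < pB0 := by
    rw [hPr00] at hpos00
    nlinarith [hpA0pos, hpos00]
  -- Step 3: rho0 = pB1
  have hset10 : {ω | S ω = 1 ∧ Z ω = 0} = A0 ∩ B1 := by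
    ext ω
    simp only [Set.mem_setOf_eq, Set.mem_inter_iff, hA0def, hB1def, Set.mem_preimage,
      Set.mem_singleton_iff]
    constructor
    · rintro ⟨hs, h0⟩
      rw [hconsS ω, if_neg (hZne ω h0)] at hs
      exact ⟨h0, hs⟩
    · rintro ⟨h0, hs⟩
      exact ⟨by rw [hconsS ω, if_neg (hZne ω h0)]; exact hs, h0⟩
  have hrho : ρ0 = pB1 := by
    rw [hρ0, Pr, Pr, hset10, hmul01, ENNReal.toReal_mul, hA0eq]
    show pA0 * pB1 / pA0 = pB1
    field_simp
  have hpB1pos : 0 < pB1 := hrho ▸ hρ0pos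
  -- B0 is the complement of B1
  have hBcompl : B0 = B1ᶜ := by
    ext ω
    simp only [hB0def, hB1def, Set.mem_preimage, Set.mem_singleton_iff, Set.mem_compl_iff]
    rcases hS0 ω with h | h <;> simp [h]
  have hpB0eq : pB0 = 1 - pB1 := by
    have h1 : μ B0 = 1 - μ B1 := by
      rw [hBcompl, measure_compl hB1m (measure_ne_top μ B1), measure_univ]
    rw [hpB0, h1, ENNReal.toReal_sub_of_le (prob_le_one) (by simp), ENNReal.toReal_one, hpB1]
  -- Step 4: ∫_{B0} Y0 = ∫_{B0} Y1 a.e.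
  have hcongr : ∫ ω in B0, Y0 ω ∂μ = ∫ ω in B0, Y1 ω ∂μ := by
    refine setIntegral_congr_ae hB0m ?_
    filter_upwards [hmono, hER] with ω hm he hmem
    simp only [hB0def, Set.mem_preimage, Set.mem_singleton_iff] at hmem
    have hs1 : S1 ω = 0 := by
      rcases hS1 ω with h | h
      · exact h
      · rw [h, hmem] at hm; norm_num at hm
    exact (he ⟨hmem, hs1⟩).symm
  -- Step 5: cexp over {Z=0 ∧ S=0}
  have hindY0 : (fun ω => (Set.indicator (Prod.fst ⁻¹' {(0:ℝ)}) (fun q : ℝ × ℝ × ℝ × ℝ => q.2.2.1)) (W ω))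
      = Set.indicator B0 Y0 := by
    ext ω
    by_cases h : S0 ω = 0
    · simp [Set.indicator, h, hW, hB0def]
    · simp [Set.indicator, h, hW, hB0def]
  have step2int : ∫ ω in A0 ∩ B0, Y ω ∂μ = pA0 * ∫ ω in B0, Y0 ω ∂μ := by
    have e1 : ∫ ω in A0 ∩ B0, Y ω ∂μ = ∫ ω in A0 ∩ B0, Y0 ω ∂μ := by
      refine setIntegral_congr_fun (hA0m.inter hB0m) ?_
      intro ω hω
      rw [hconsY ω, if_neg (hZne ω hω.1)]
    have e2 : ∫ ω in A0 ∩ B0, Y0 ω ∂μ = ∫ ω in A0, Set.indicator B0 Y0 ω ∂μ := by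
      rw [setIntegral_indicator hB0m]
    have e3 : ∫ ω in A0, Set.indicator B0 Y0 ω ∂μ = pA0 * ∫ ω, Set.indicator B0 Y0 ω ∂μ := by
      have := helper_int μ Z W hZm hindep
        (Set.indicator (Prod.fst ⁻¹' {(0:ℝ)}) (fun q : ℝ × ℝ × ℝ × ℝ => q.2.2.1))
        (Measurable.indicator (by fun_prop) (measurable_fst (measurableSet_singleton 0)))
        (by rw [hindY0]; exact hint0.indicator hB0m) 0
      rw [hindY0] at this
      exact this
    rw [e1, e2, e3, integral_indicator hB0m]
  have step2 : cexp μ Y {ω | Z ω = 0 ∧ S ω = 0} = (∫ ω in B0, Y1 ω ∂μ) / pB0 := by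
    rw [cexp, hset00, step2int, hcongr, Pr, hmul00, ENNReal.toReal_mul]
    show pA0 * _ / (pA0 * pB0) = _
    field_simp
  -- Step 6: total integral decomposition
  have hsplit : ∫ ω in B1, Y1 ω ∂μ + ∫ ω in B0, Y1 ω ∂μ = ∫ ω, Y1 ω ∂μ := by
    rw [hBcompl]
    exact integral_add_compl hB1m hint1
  -- Final computation
  rw [step1, step2, hrho, hB1eq, cexp, Pr]
  rw [show (μ B1).toReal = pB1 from rfl]
  rw [hpB0eq.symm, ← hsplit]
  field_simp
  ring
end

section
/- Under randomization, consistency, monotonicity, and partial principal ignorability S(0) ⫫ Y(1) | X, S(1)=0 (with discrete X), the conditional mean of Y(1) in the Protected stratum is E[Y(1) | S(0)=1, S(1)=0, X=x] = E[Y | Z=1, S=0, X=x] for every x with P(S(0)=1, S(1)=0, X=x) > 0 and P(Z=1, S=0, X=x) > 0. -/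
open MeasureTheory ProbabilityTheory

/-- Identification of the Protected-stratum conditional mean via partial principal
ignorability: `E[Y(1) | S(0)=1, S(1)=0, X=x] = E[Y | Z=1, S=0, X=x]`. -/
theorem id_protected_mean_PPI
    {Ω : Type*} [MeasurableSpace Ω] (μ : Measure Ω) [IsProbabilityMeasure μ]
    (X : Ω → ℕ) (Z S0 S1 Y0 Y1 S Y : Ω → ℝ)
    (hXm : Measurable X) (hZm : Measurable Z)
    (hS0m : Measurable S0) (hS1m : Measurable S1)
    (hY0m : Measurable Y0) (hY1m : Measurable Y1)
    (hZ : ∀ ω, Z ω = 0 ∨ Z ω = 1)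
    (hS0 : ∀ ω, S0 ω = 0 ∨ S0 ω = 1) (hS1 : ∀ ω, S1 ω = 0 ∨ S1 ω = 1)
    (hindep : IndepFun Z (fun ω => (X ω, S0 ω, S1 ω, Y0 ω, Y1 ω)) μ)
    (hconsS : ∀ ω, S ω = if Z ω = 1 then S1 ω else S0 ω)
    (hconsY : ∀ ω, Y ω = if Z ω = 1 then Y1 ω else Y0 ω)
    (hmono : ∀ᵐ ω ∂μ, S1 ω ≤ S0 ω)
    (hint : Integrable Y1 μ)
    -- partial principal ignorability: Y(1) ⫫ S(0) given (X = x, S(1) = 0)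
    (hPPI : ∀ (x : ℕ) (B : Set ℝ), MeasurableSet B → ∀ s₀ : ℝ,
      μ ({ω | Y1 ω ∈ B ∧ S0 ω = s₀} ∩ {ω | X ω = x ∧ S1 ω = 0})
          * μ {ω | X ω = x ∧ S1 ω = 0}
        = μ ({ω | Y1 ω ∈ B} ∩ {ω | X ω = x ∧ S1 ω = 0})
          * μ ({ω | S0 ω = s₀} ∩ {ω | X ω = x ∧ S1 ω = 0})) :
    ∀ x : ℕ,
      0 < Pr μ {ω | S0 ω = 1 ∧ S1 ω = 0 ∧ X ω = x} →
      0 < Pr μ {ω | Z ω = 1 ∧ S ω = 0 ∧ X ω = x} →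
      cexp μ Y1 {ω | S0 ω = 1 ∧ S1 ω = 0 ∧ X ω = x}
        = cexp μ Y {ω | Z ω = 1 ∧ S ω = 0 ∧ X ω = x} := by
  intro x hpos1 hpos2
  classical
  set A : Set Ω := {ω | X ω = x ∧ S1 ω = 0} with hAdef
  have hAmeas : MeasurableSet A :=
    (hXm (measurableSet_singleton x)).inter (hS1m (measurableSet_singleton 0))
  set SL : Set Ω := {ω | S0 ω = 1} ∩ A with hSLdef
  have hSLmeas : MeasurableSet SL := (hS0m (measurableSet_singleton 1)).inter hAmeas
  have hLeq : {ω | S0 ω = 1 ∧ S1 ω = 0 ∧ X ω = x} = SL := by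
    ext ω; simp only [hSLdef, hAdef, Set.mem_setOf_eq, Set.mem_inter_iff]; tauto
  set c₁ : ENNReal := μ SL with hc₁
  set c₂ : ENNReal := μ A with hc₂
  -- PPI ⇒ equality of pushforward measures
  have hmeq : (c₂ • μ.restrict SL).map Y1 = (c₁ • μ.restrict A).map Y1 := by
    ext B hB
    rw [Measure.map_apply hY1m hB, Measure.map_apply hY1m hB]
    simp only [Measure.smul_apply, smul_eq_mul]
    rw [Measure.restrict_apply (hY1m hB), Measure.restrict_apply (hY1m hB)]
    have hp := hPPI x B hB 1
    have e1 : {ω | Y1 ω ∈ B ∧ S0 ω = 1} ∩ {ω | X ω = x ∧ S1 ω = 0}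
        = Y1 ⁻¹' B ∩ SL := by
      ext ω
      simp only [hSLdef, hAdef, Set.mem_inter_iff, Set.mem_setOf_eq, Set.mem_preimage]; tauto
    have e2 : {ω | Y1 ω ∈ B} ∩ {ω | X ω = x ∧ S1 ω = 0} = Y1 ⁻¹' B ∩ A := rfl
    rw [e1, e2] at hp
    rw [mul_comm c₂, mul_comm c₁]
    exact hp
  have hI : c₂.toReal * ∫ ω in SL, Y1 ω ∂μ = c₁.toReal * ∫ ω in A, Y1 ω ∂μ := by
    have h1 : ∫ y, id y ∂((c₂ • μ.restrict SL).map Y1) = ∫ y, id y ∂((c₁ • μ.restrict A).map Y1) := by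
      rw [hmeq]
    rw [integral_map hY1m.aemeasurable aestronglyMeasurable_id,
        integral_map hY1m.aemeasurable aestronglyMeasurable_id,
        integral_smul_measure, integral_smul_measure] at h1
    simpa [id] using h1
  -- independence part
  set W : Ω → ℕ × ℝ × ℝ × ℝ × ℝ := fun ω => (X ω, S0 ω, S1 ω, Y0 ω, Y1 ω) with hWdef
  have hWm : Measurable W := hXm.prodMk (hS0m.prodMk (hS1m.prodMk (hY0m.prodMk hY1m)))
  set T : Set (ℕ × ℝ × ℝ × ℝ × ℝ) := {p | p.1 = x ∧ p.2.2.1 = 0} with hTdef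
  have hs1m : Measurable fun p : ℕ × ℝ × ℝ × ℝ × ℝ => p.2.2.1 :=
    measurable_fst.comp (measurable_snd.comp measurable_snd)
  have hTm : MeasurableSet T :=
    (measurable_fst (measurableSet_singleton x)).inter (hs1m (measurableSet_singleton 0))
  have hWT : W ⁻¹' T = A := rfl
  set f5 : ℕ × ℝ × ℝ × ℝ × ℝ → ℝ := fun p => p.2.2.2.2 with hf5def
  have hf5m : Measurable f5 :=
    measurable_snd.comp (measurable_snd.comp (measurable_snd.comp measurable_snd))
  set φ : ℝ → ℝ := Set.indicator {1} (fun _ => (1 : ℝ)) with hφdef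
  have hφm : Measurable φ := measurable_const.indicator (measurableSet_singleton 1)
  set h5 : ℕ × ℝ × ℝ × ℝ × ℝ → ℝ := T.indicator f5 with hh5def
  have hh5m : Measurable h5 := hf5m.indicator hTm
  have hcomp : IndepFun (φ ∘ Z) (h5 ∘ W) μ := hindep.comp hφm hh5m
  have eφ : φ ∘ Z = (Z ⁻¹' {1}).indicator (fun _ => (1 : ℝ)) := by
    funext ω; simp [hφdef, Set.indicator_apply, Set.mem_preimage, Pi.single_apply]
  have eh5 : h5 ∘ W = A.indicator Y1 := by
    funext ω
    simp only [hh5def, Function.comp_apply, Set.indicator_apply]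
    rfl
  set E' : Set Ω := {ω | Z ω = 1} ∩ A with hE'def
  have hZ1eq : Z ⁻¹' {1} = {ω | Z ω = 1} := rfl
  have hE'meas : MeasurableSet E' := (hZm (measurableSet_singleton 1)).inter hAmeas
  have eprod : (φ ∘ Z) * (h5 ∘ W) = E'.indicator Y1 := by
    funext ω
    rw [Pi.mul_apply, eφ, eh5]
    simp only [Set.indicator_apply, Set.mem_preimage, Set.mem_singleton_iff,
      hE'def, Set.mem_inter_iff, Set.mem_setOf_eq]
    by_cases h1 : Z ω = 1 <;> by_cases h2 : ω ∈ A <;> simp [h1, h2]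
  have Int1 : Integrable (φ ∘ Z) μ := by
    rw [eφ]; exact (integrable_const (1 : ℝ)).indicator (hZm (measurableSet_singleton 1))
  have Int2 : Integrable (h5 ∘ W) μ := by
    rw [eh5]; exact hint.indicator hAmeas
  have hmul := hcomp.integral_mul_eq_mul_integral Int1.aestronglyMeasurable Int2.aestronglyMeasurable
  rw [eprod] at hmul
  rw [eφ] at hmul
  rw [integral_indicator hE'meas, integral_indicator_const (1 : ℝ)
    (hZm (measurableSet_singleton 1)), eh5, integral_indicator hAmeas] at hmul
  set a : ℝ := (μ (Z ⁻¹' {1})).toReal with hadef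
  -- hmul : ∫ ω in E', Y1 ω ∂μ = (a • 1) * ∫ ω in A, Y1 ω ∂μ
  have hmeasE' : μ E' = μ (Z ⁻¹' {1}) * c₂ := by
    have := hindep.measure_inter_preimage_eq_mul {1} T (measurableSet_singleton 1) hTm
    rw [hWT] at this
    exact this
  -- RHS set equals E', and Y = Y1 on it
  have hSe : ∀ ω, Z ω = 1 → S ω = S1 ω := fun ω h => by rw [hconsS ω, if_pos h]
  have hReq : {ω | Z ω = 1 ∧ S ω = 0 ∧ X ω = x} = E' := by
    ext ω
    simp only [hE'def, hAdef, Set.mem_setOf_eq, Set.mem_inter_iff]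
    constructor
    · rintro ⟨h1, h2, h3⟩
      exact ⟨h1, h3, by rw [← hSe ω h1]; exact h2⟩
    · rintro ⟨h1, h3, h2⟩
      exact ⟨h1, by rw [hSe ω h1]; exact h2, h3⟩
  have hYeq : ∫ ω in E', Y ω ∂μ = ∫ ω in E', Y1 ω ∂μ := by
    refine setIntegral_congr_fun hE'meas fun ω hω => ?_
    rw [hconsY ω, if_pos (show Z ω = 1 from hω.1)]
  -- positivity
  rw [hLeq] at hpos1
  have hc₁pos : 0 < c₁.toReal := hpos1
  have hc₂fin : c₂ ≠ ⊤ := measure_ne_top μ A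
  have hc₂pos : 0 < c₂.toReal := by
    refine lt_of_lt_of_le hc₁pos (ENNReal.toReal_mono hc₂fin ?_)
    exact measure_mono Set.inter_subset_right
  have hPrE' : Pr μ {ω | Z ω = 1 ∧ S ω = 0 ∧ X ω = x} = a * c₂.toReal := by
    unfold Pr
    rw [hReq, hmeasE', ENNReal.toReal_mul]
  have hapos : 0 < a := by
    rw [hPrE'] at hpos2
    rcases mul_pos_iff.mp hpos2 with ⟨h, _⟩ | ⟨h, _⟩
    · exact h
    · exact absurd h (not_lt.mpr ENNReal.toReal_nonneg)
  -- final computation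
  unfold cexp Pr
  rw [hLeq, hReq, hYeq, hmeasE', ENNReal.toReal_mul, hmul]
  rw [smul_eq_mul, mul_one, measureReal_def]
  rw [mul_div_mul_left _ _ (ne_of_gt hapos)]
  rw [div_eq_div_iff (ne_of_gt hc₁pos) (ne_of_gt hc₂pos)]
  linarith [hI]
end

section
/- Under randomization, consistency, monotonicity, and partial principal ignorability, with discrete X and ρ_z(x) = P(S=1 | Z=z, X=x), μ_zs(x) = E[Y | Z=z, S=s, X=x], ρ̄_0 = P(S=1 | Z=0): E[Y(1) | S(0)=1] = Σ_x (ρ_0(x)/ρ̄_0)·[μ_11(x)·(ρ_1(x)/ρ_0(x)) + μ_10(x)·(1 − ρ_1(x)/ρ_0(x))]·P(X=x). -/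
open MeasureTheory ProbabilityTheory

/-- Conditional-independence of an indicator from a random variable (given as a product
identity of measures on all Borel sets) implies the corresponding integral identity. -/
lemma ppi_aux {Ω : Type*} [MeasurableSpace Ω] (μ : Measure Ω) [IsFiniteMeasure μ]
    (Y1 : Ω → ℝ) (hY1m : Measurable Y1) (A C : Set Ω)
    (h : ∀ B : Set ℝ, MeasurableSet B →
      μ (Y1 ⁻¹' B ∩ A) * μ C = μ (Y1 ⁻¹' B ∩ C) * μ A) :
    (∫ ω in A, Y1 ω ∂μ) * (μ C).toReal = (∫ ω in C, Y1 ω ∂μ) * (μ A).toReal := by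
  have hmeq : (μ C) • (μ.restrict A).map Y1 = (μ A) • (μ.restrict C).map Y1 := by
    ext B hB
    simp only [Measure.smul_apply, smul_eq_mul,
      Measure.map_apply hY1m hB, Measure.restrict_apply (hY1m hB)]
    rw [mul_comm (μ C), mul_comm (μ A)]
    exact h B hB
  have h2 := congrArg (fun ν : Measure ℝ => ∫ y, y ∂ν) hmeq
  simp only [integral_smul_measure] at h2
  have hA' : (∫ y, y ∂(Measure.map Y1 (μ.restrict A))) = ∫ ω in A, Y1 ω ∂μ :=
    integral_map hY1m.aemeasurable aestronglyMeasurable_id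
  have hC' : (∫ y, y ∂(Measure.map Y1 (μ.restrict C))) = ∫ ω in C, Y1 ω ∂μ :=
    integral_map hY1m.aemeasurable aestronglyMeasurable_id
  rw [hA', hC'] at h2
  simp only [smul_eq_mul] at h2
  linarith

/-- Identification of `E[Y(1) | S(0)=1]` under partial principal ignorability:
the ψ₁PI functional. -/
theorem id_EY1_naturally_infected_PPI
    {Ω : Type*} [MeasurableSpace Ω] (μ : Measure Ω) [IsProbabilityMeasure μ]
    (X : Ω → ℕ) (Z S0 S1 Y0 Y1 S Y : Ω → ℝ)
    (ρF0 ρF1 m11 m10 : ℕ → ℝ) (rbar0 : ℝ)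
    (hXm : Measurable X) (hZm : Measurable Z)
    (hS0m : Measurable S0) (hS1m : Measurable S1)
    (hY0m : Measurable Y0) (hY1m : Measurable Y1)
    (hZ : ∀ ω, Z ω = 0 ∨ Z ω = 1)
    (hS0 : ∀ ω, S0 ω = 0 ∨ S0 ω = 1) (hS1 : ∀ ω, S1 ω = 0 ∨ S1 ω = 1)
    (hindep : IndepFun Z (fun ω => (X ω, S0 ω, S1 ω, Y0 ω, Y1 ω)) μ)
    (hconsS : ∀ ω, S ω = if Z ω = 1 then S1 ω else S0 ω)
    (hconsY : ∀ ω, Y ω = if Z ω = 1 then Y1 ω else Y0 ω)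
    (hmono : ∀ᵐ ω ∂μ, S1 ω ≤ S0 ω)
    (hint : Integrable Y1 μ)
    (hPPI : ∀ (x : ℕ) (B : Set ℝ), MeasurableSet B → ∀ s₀ : ℝ,
      μ ({ω | Y1 ω ∈ B ∧ S0 ω = s₀} ∩ {ω | X ω = x ∧ S1 ω = 0})
          * μ {ω | X ω = x ∧ S1 ω = 0}
        = μ ({ω | Y1 ω ∈ B} ∩ {ω | X ω = x ∧ S1 ω = 0})
          * μ ({ω | S0 ω = s₀} ∩ {ω | X ω = x ∧ S1 ω = 0}))
    (hρF0 : ∀ x, ρF0 x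
      = Pr μ {ω | S ω = 1 ∧ Z ω = 0 ∧ X ω = x} / Pr μ {ω | Z ω = 0 ∧ X ω = x})
    (hρF1 : ∀ x, ρF1 x
      = Pr μ {ω | S ω = 1 ∧ Z ω = 1 ∧ X ω = x} / Pr μ {ω | Z ω = 1 ∧ X ω = x})
    (hm11 : ∀ x, m11 x = cexp μ Y {ω | Z ω = 1 ∧ S ω = 1 ∧ X ω = x})
    (hm10 : ∀ x, m10 x = cexp μ Y {ω | Z ω = 1 ∧ S ω = 0 ∧ X ω = x})
    (hrbar0 : rbar0 = Pr μ {ω | S ω = 1 ∧ Z ω = 0} / Pr μ {ω | Z ω = 0})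
    (hposX : ∀ x, 0 < Pr μ {ω | X ω = x} →
      0 < Pr μ {ω | Z ω = 0 ∧ X ω = x} ∧ 0 < Pr μ {ω | Z ω = 1 ∧ X ω = x} ∧
      0 < ρF0 x ∧ 0 < ρF1 x ∧ ρF1 x < 1)
    (hrpos : 0 < rbar0) :
    cexp μ Y1 {ω | S0 ω = 1}
      = ∑' x : ℕ, (ρF0 x / rbar0)
          * (m11 x * (ρF1 x / ρF0 x) + m10 x * (1 - ρF1 x / ρF0 x))
          * Pr μ {ω | X ω = x} := by
  classical
  set W : Ω → ℕ × ℝ × ℝ × ℝ × ℝ := fun ω => (X ω, S0 ω, S1 ω, Y0 ω, Y1 ω) with hW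
  have hWm : Measurable W := by
    rw [hW]; exact hXm.prodMk (hS0m.prodMk (hS1m.prodMk (hY0m.prodMk hY1m)))
  -- independence: measures
  have hIM : ∀ (s : Set ℝ) (t : Set (ℕ × ℝ × ℝ × ℝ × ℝ)), MeasurableSet s → MeasurableSet t →
      μ (Z ⁻¹' s ∩ W ⁻¹' t) = μ (Z ⁻¹' s) * μ (W ⁻¹' t) := fun s t hs ht =>
    (indepFun_iff_measure_inter_preimage_eq_mul.mp hindep) s t hs ht
  have hPr2 : ∀ (z : ℝ) (t : Set (ℕ × ℝ × ℝ × ℝ × ℝ)), MeasurableSet t →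
      Pr μ (Z ⁻¹' {z} ∩ W ⁻¹' t) = Pr μ (Z ⁻¹' {z}) * Pr μ (W ⁻¹' t) := by
    intro z t ht
    simp only [Pr, hIM {z} t (measurableSet_singleton z) ht, ENNReal.toReal_mul]
  -- independence: integrals
  have hII : ∀ t : Set (ℕ × ℝ × ℝ × ℝ × ℝ), MeasurableSet t →
      ∫ ω in Z ⁻¹' {1} ∩ W ⁻¹' t, Y1 ω ∂μ
        = Pr μ (Z ⁻¹' {1}) * ∫ ω in W ⁻¹' t, Y1 ω ∂μ := by
    intro t ht
    have hg : Measurable (fun p : ℕ × ℝ × ℝ × ℝ × ℝ => p.2.2.2.2) :=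
      measurable_snd.comp (measurable_snd.comp (measurable_snd.comp measurable_snd))
    have hφ : Measurable (({(1 : ℝ)} : Set ℝ).indicator (1 : ℝ → ℝ)) :=
      measurable_one.indicator (measurableSet_singleton 1)
    have hψ : Measurable (t.indicator (fun p : ℕ × ℝ × ℝ × ℝ × ℝ => p.2.2.2.2)) :=
      hg.indicator ht
    have hind := (hindep.comp hφ hψ).integral_fun_mul_eq_mul_integral
      ((hφ.comp hZm).aestronglyMeasurable) ((hψ.comp hWm).aestronglyMeasurable)
    have e1 : (fun ω => (({(1 : ℝ)} : Set ℝ).indicator (1 : ℝ → ℝ)) (Z ω)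
          * (t.indicator (fun p : ℕ × ℝ × ℝ × ℝ × ℝ => p.2.2.2.2)) (W ω))
        = (Z ⁻¹' {1} ∩ W ⁻¹' t).indicator Y1 := by
      funext ω
      by_cases h1 : Z ω ∈ ({(1 : ℝ)} : Set ℝ) <;> by_cases h2 : W ω ∈ t <;>
        simp [Set.indicator_apply, h1, h2, hW]
    have e2 : (fun ω => (({(1 : ℝ)} : Set ℝ).indicator (1 : ℝ → ℝ)) (Z ω))
        = (Z ⁻¹' {1}).indicator (1 : Ω → ℝ) := by
      funext ω
      by_cases h1 : Z ω ∈ ({(1 : ℝ)} : Set ℝ) <;> simp [Set.indicator_apply, h1]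
    have e3 : (fun ω => (t.indicator (fun p : ℕ × ℝ × ℝ × ℝ × ℝ => p.2.2.2.2)) (W ω))
        = (W ⁻¹' t).indicator Y1 := by
      funext ω
      by_cases h2 : W ω ∈ t <;> simp [Set.indicator_apply, h2, hW]
    calc ∫ ω in Z ⁻¹' {1} ∩ W ⁻¹' t, Y1 ω ∂μ
        = ∫ ω, (Z ⁻¹' {1} ∩ W ⁻¹' t).indicator Y1 ω ∂μ :=
          (integral_indicator ((hZm (measurableSet_singleton 1)).inter (hWm ht))).symm
      _ = ∫ ω, (({(1 : ℝ)} : Set ℝ).indicator (1 : ℝ → ℝ)) (Z ω)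
            * (t.indicator (fun p : ℕ × ℝ × ℝ × ℝ × ℝ => p.2.2.2.2)) (W ω) ∂μ := by
          rw [e1]
      _ = (∫ ω, (({(1 : ℝ)} : Set ℝ).indicator (1 : ℝ → ℝ)) (Z ω) ∂μ)
            * ∫ ω, (t.indicator (fun p : ℕ × ℝ × ℝ × ℝ × ℝ => p.2.2.2.2)) (W ω) ∂μ := hind
      _ = Pr μ (Z ⁻¹' {1}) * ∫ ω in W ⁻¹' t, Y1 ω ∂μ := by
          rw [e2, e3, integral_indicator (hWm ht),
            integral_indicator_one (hZm (measurableSet_singleton 1))]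
          rfl
  -- basic facts about Z
  have hZ01 : ∀ ω, Z ω = 0 → Z ω ≠ 1 := fun ω h h1 => by
    rw [h] at h1; exact zero_ne_one h1
  have hScons0 : ∀ ω, Z ω = 0 → S ω = S0 ω := fun ω h => by
    rw [hconsS, if_neg (hZ01 ω h)]
  have hScons1 : ∀ ω, Z ω = 1 → S ω = S1 ω := fun ω h => by
    rw [hconsS, if_pos h]
  -- rbar0 = Pr (S0 = 1)
  have hb : Pr μ {ω | S0 ω = 1} = rbar0 := by
    have hset : {ω | S ω = 1 ∧ Z ω = 0} = Z ⁻¹' {0} ∩ W ⁻¹' {p | p.2.1 = 1} := by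
      ext ω
      simp only [Set.mem_setOf_eq, Set.mem_inter_iff, Set.mem_preimage,
        Set.mem_singleton_iff, hW]
      exact ⟨fun ⟨h1, h2⟩ => ⟨h2, by rw [← hScons0 ω h2]; exact h1⟩,
        fun ⟨h2, h1⟩ => ⟨by rw [hScons0 ω h2]; exact h1, h2⟩⟩
    have hTm : MeasurableSet {p : ℕ × ℝ × ℝ × ℝ × ℝ | p.2.1 = 1} :=
      (measurable_fst.comp measurable_snd) (measurableSet_singleton 1)
    have h1 : Pr μ {ω | S ω = 1 ∧ Z ω = 0}
        = Pr μ (Z ⁻¹' {0}) * Pr μ {ω | S0 ω = 1} := by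
      rw [hset, hPr2 0 _ hTm]
      rfl
    have h2 : Pr μ {ω | Z ω = 0} = Pr μ (Z ⁻¹' {0}) := rfl
    rw [hrbar0, h1, h2]
    by_cases ha : Pr μ (Z ⁻¹' {0}) = 0
    · exfalso
      rw [hrbar0, h1, h2, ha] at hrpos
      simp at hrpos
    · rw [mul_comm, mul_div_assoc, div_self ha, mul_one]
  -- monotonicity: S1 = 1 implies S0 = 1 a.e.
  have hmononull : μ {ω | ¬ S1 ω ≤ S0 ω} = 0 := by
    exact ae_iff.mp hmono
  -- the per-x integral
  set J : ℕ → ℝ := fun x => ∫ ω in {ω | S0 ω = 1 ∧ X ω = x}, Y1 ω ∂μ with hJdef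
  -- the per-x identity
  have hterm : ∀ x : ℕ,
      (ρF0 x / rbar0) * (m11 x * (ρF1 x / ρF0 x) + m10 x * (1 - ρF1 x / ρF0 x))
        * Pr μ {ω | X ω = x} = J x / rbar0 := by
    intro x
    rcases eq_or_lt_of_le (ENNReal.toReal_nonneg : (0:ℝ) ≤ Pr μ {ω | X ω = x}) with hx | hx
    · -- P(X = x) = 0
      have hx0 : μ {ω | X ω = x} = 0 := by
        rcases (ENNReal.toReal_eq_zero_iff _).mp hx.symm with h | h
        · exact h
        · exact absurd h (measure_ne_top μ _)
      have hJ0 : J x = 0 := by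
        have hnull : μ {ω | S0 ω = 1 ∧ X ω = x} = 0 :=
          measure_mono_null (fun ω hω => hω.2) hx0
        rw [hJdef]
        simp only []
        rw [show μ.restrict {ω | S0 ω = 1 ∧ X ω = x} = 0 from
          Measure.restrict_eq_zero.mpr hnull, integral_zero_measure]
      have hx' : Pr μ {ω | X ω = x} = 0 := hx.symm
      rw [hJ0, hx']
      simp
    · -- P(X = x) > 0
      have hxP : 0 < Pr μ {ω | X ω = x} := hx
      obtain ⟨hz0x, hz1x, hρ0, hρ1, hρ1'⟩ := hposX x hxP
      have mX : MeasurableSet {ω | X ω = x} := hXm (measurableSet_singleton x)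
      have mS0set : MeasurableSet {ω | S0 ω = 1} := hS0m (measurableSet_singleton 1)
      set pX := Pr μ {ω | X ω = x} with hpXdef
      set p0 := Pr μ {ω | S0 ω = 1 ∧ X ω = x} with hp0def
      set p1 := Pr μ {ω | S1 ω = 1 ∧ X ω = x} with hp1def
      set q := Pr μ {ω | S1 ω = 0 ∧ X ω = x} with hqdef
      set I1 := ∫ ω in {ω | S1 ω = 1 ∧ X ω = x}, Y1 ω ∂μ with hI1def
      set I0 := ∫ ω in {ω | S1 ω = 0 ∧ X ω = x}, Y1 ω ∂μ with hI0def
      set r := Pr μ {ω | S0 ω = 1 ∧ S1 ω = 0 ∧ X ω = x} with hrdef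
      set K := ∫ ω in {ω | S0 ω = 1 ∧ S1 ω = 0 ∧ X ω = x}, Y1 ω ∂μ with hKdef
      -- measurable product sets
      have mT1 : ∀ s : ℝ, MeasurableSet {p : ℕ × ℝ × ℝ × ℝ × ℝ | p.2.2.1 = s ∧ p.1 = x} :=
        fun s =>
        ((measurable_fst.comp (measurable_snd.comp measurable_snd))
            (measurableSet_singleton s)).inter (measurable_fst (measurableSet_singleton x))
      have mT0 : MeasurableSet {p : ℕ × ℝ × ℝ × ℝ × ℝ | p.2.1 = 1 ∧ p.1 = x} :=
        ((measurable_fst.comp measurable_snd) (measurableSet_singleton 1)).inter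
          (measurable_fst (measurableSet_singleton x))
      have mTX : MeasurableSet {p : ℕ × ℝ × ℝ × ℝ × ℝ | p.1 = x} :=
        measurable_fst (measurableSet_singleton x)
      -- marginal factorizations over Z
      have ha0x : Pr μ {ω | Z ω = 0 ∧ X ω = x} = Pr μ (Z ⁻¹' {0}) * pX := by
        have e : {ω | Z ω = 0 ∧ X ω = x} = Z ⁻¹' {0} ∩ W ⁻¹' {p | p.1 = x} := rfl
        rw [e, hPr2 0 _ mTX]
        rfl
      have ha1x : Pr μ {ω | Z ω = 1 ∧ X ω = x} = Pr μ (Z ⁻¹' {1}) * pX := by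
        have e : {ω | Z ω = 1 ∧ X ω = x} = Z ⁻¹' {1} ∩ W ⁻¹' {p | p.1 = x} := rfl
        rw [e, hPr2 1 _ mTX]
        rfl
      rw [ha0x] at hz0x
      rw [ha1x] at hz1x
      have ha0 : 0 < Pr μ (Z ⁻¹' {0}) := by
        by_contra hcon
        push_neg at hcon
        have h0 : Pr μ (Z ⁻¹' {0}) = 0 := le_antisymm hcon ENNReal.toReal_nonneg
        rw [h0, zero_mul] at hz0x
        exact lt_irrefl 0 hz0x
      have ha1 : 0 < Pr μ (Z ⁻¹' {1}) := by
        by_contra hcon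
        push_neg at hcon
        have h0 : Pr μ (Z ⁻¹' {1}) = 0 := le_antisymm hcon ENNReal.toReal_nonneg
        rw [h0, zero_mul] at hz1x
        exact lt_irrefl 0 hz1x
      -- identification of the propensities
      have hρ0eq : ρF0 x = p0 / pX := by
        have hnum : Pr μ {ω | S ω = 1 ∧ Z ω = 0 ∧ X ω = x} = Pr μ (Z ⁻¹' {0}) * p0 := by
          have hset : {ω | S ω = 1 ∧ Z ω = 0 ∧ X ω = x}
              = Z ⁻¹' {0} ∩ W ⁻¹' {p | p.2.1 = 1 ∧ p.1 = x} := by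
            ext ω
            simp only [Set.mem_setOf_eq, Set.mem_inter_iff, Set.mem_preimage,
              Set.mem_singleton_iff, hW]
            constructor
            · rintro ⟨h1, h2, h3⟩
              exact ⟨h2, by rw [← hScons0 ω h2]; exact h1, h3⟩
            · rintro ⟨h2, h1, h3⟩
              exact ⟨by rw [hScons0 ω h2]; exact h1, h2, h3⟩
          rw [hset, hPr2 0 _ mT0]
          rfl
        rw [hρF0 x, hnum, ha0x, mul_div_mul_left _ _ (ne_of_gt ha0)]
      have hρ1eq : ρF1 x = p1 / pX := by
        have hnum : Pr μ {ω | S ω = 1 ∧ Z ω = 1 ∧ X ω = x} = Pr μ (Z ⁻¹' {1}) * p1 := by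
          have hset : {ω | S ω = 1 ∧ Z ω = 1 ∧ X ω = x}
              = Z ⁻¹' {1} ∩ W ⁻¹' {p | p.2.2.1 = 1 ∧ p.1 = x} := by
            ext ω
            simp only [Set.mem_setOf_eq, Set.mem_inter_iff, Set.mem_preimage,
              Set.mem_singleton_iff, hW]
            constructor
            · rintro ⟨h1, h2, h3⟩
              exact ⟨h2, by rw [← hScons1 ω h2]; exact h1, h3⟩
            · rintro ⟨h2, h1, h3⟩
              exact ⟨by rw [hScons1 ω h2]; exact h1, h2, h3⟩
          rw [hset, hPr2 1 _ (mT1 1)]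
          rfl
        rw [hρF1 x, hnum, ha1x, mul_div_mul_left _ _ (ne_of_gt ha1)]
      have hpXne : pX ≠ 0 := ne_of_gt hxP
      have hp0v : p0 = ρF0 x * pX := by rw [hρ0eq]; field_simp
      have hp0pos : 0 < p0 := by rw [hp0v]; exact mul_pos hρ0 hxP
      have hp1v : p1 = ρF1 x * pX := by rw [hρ1eq]; field_simp
      have hp1pos : 0 < p1 := by rw [hp1v]; exact mul_pos hρ1 hxP
      have hp1lt : p1 < pX := by rw [hp1v]; nlinarith
      -- q = pX - p1
      have hqv : q = pX - p1 := by
        have hsetu : {ω | X ω = x} = {ω | S1 ω = 0 ∧ X ω = x} ∪ {ω | S1 ω = 1 ∧ X ω = x} := by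
          ext ω
          simp only [Set.mem_setOf_eq, Set.mem_union]
          constructor
          · intro h
            rcases hS1 ω with h1 | h1
            · exact Or.inl ⟨h1, h⟩
            · exact Or.inr ⟨h1, h⟩
          · rintro (⟨_, h⟩ | ⟨_, h⟩) <;> exact h
        have hdisj : Disjoint {ω | S1 ω = 0 ∧ X ω = x} {ω | S1 ω = 1 ∧ X ω = x} :=
          Set.disjoint_left.mpr fun ω h1 h2 => zero_ne_one (h1.1.symm.trans h2.1)
        have hm1 : MeasurableSet {ω | S1 ω = 1 ∧ X ω = x} :=
          (hS1m (measurableSet_singleton 1)).inter mX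
        have hE : μ {ω | X ω = x}
            = μ {ω | S1 ω = 0 ∧ X ω = x} + μ {ω | S1 ω = 1 ∧ X ω = x} := by
          rw [hsetu]; exact measure_union hdisj hm1
        have h2 : pX = q + p1 := by
          rw [hpXdef, hqdef, hp1def]
          simp only [Pr]
          rw [hE, ENNReal.toReal_add (measure_ne_top μ _) (measure_ne_top μ _)]
        linarith
      have hqpos : 0 < q := by rw [hqv]; linarith
      -- monotonicity consequences
      have hnull : μ ({ω | S1 ω = 1 ∧ X ω = x} \ {ω | S0 ω = 1}) = 0 := by
        apply measure_mono_null _ hmononull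
        rintro ω ⟨⟨h1, _⟩, h2⟩
        simp only [Set.mem_setOf_eq] at h2 ⊢
        rcases hS0 ω with h0 | h0
        · rw [h1, h0]; norm_num
        · exact absurd h0 h2
      have hG1 : μ {ω | S0 ω = 1 ∧ S1 ω = 1 ∧ X ω = x} = μ {ω | S1 ω = 1 ∧ X ω = x} := by
        have h := measure_inter_add_diff (μ := μ) {ω | S1 ω = 1 ∧ X ω = x} mS0set
        rw [hnull, add_zero] at h
        rw [← h]
        congr 1
        ext ω
        simp only [Set.mem_setOf_eq, Set.mem_inter_iff]
        tauto
      have hsetu0 : {ω | S0 ω = 1 ∧ X ω = x}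
          = {ω | S0 ω = 1 ∧ S1 ω = 1 ∧ X ω = x} ∪ {ω | S0 ω = 1 ∧ S1 ω = 0 ∧ X ω = x} := by
        ext ω
        simp only [Set.mem_setOf_eq, Set.mem_union]
        constructor
        · rintro ⟨h0, hx'⟩
          rcases hS1 ω with h1 | h1
          · exact Or.inr ⟨h0, h1, hx'⟩
          · exact Or.inl ⟨h0, h1, hx'⟩
        · rintro (⟨h0, _, hx'⟩ | ⟨h0, _, hx'⟩) <;> exact ⟨h0, hx'⟩
      have hdisjG : Disjoint {ω | S0 ω = 1 ∧ S1 ω = 1 ∧ X ω = x}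
          {ω | S0 ω = 1 ∧ S1 ω = 0 ∧ X ω = x} :=
        Set.disjoint_left.mpr fun ω h1 h2 => zero_ne_one (h2.2.1.symm.trans h1.2.1)
      have hmG0 : MeasurableSet {ω | S0 ω = 1 ∧ S1 ω = 0 ∧ X ω = x} :=
        mS0set.inter ((hS1m (measurableSet_singleton 0)).inter mX)
      -- r = p0 - p1
      have hrv : r = p0 - p1 := by
        have hE : μ {ω | S0 ω = 1 ∧ X ω = x}
            = μ {ω | S1 ω = 1 ∧ X ω = x} + μ {ω | S0 ω = 1 ∧ S1 ω = 0 ∧ X ω = x} := by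
          rw [hsetu0, measure_union hdisjG hmG0, hG1]
        have h2 : p0 = p1 + r := by
          rw [hp0def, hp1def, hrdef]
          simp only [Pr]
          rw [hE, ENNReal.toReal_add (measure_ne_top μ _) (measure_ne_top μ _)]
        linarith
      -- integral decomposition
      have hI1' : ∫ ω in {ω | S0 ω = 1 ∧ S1 ω = 1 ∧ X ω = x}, Y1 ω ∂μ = I1 := by
        have hmB : MeasurableSet {ω | S1 ω = 1 ∧ X ω = x} :=
          (hS1m (measurableSet_singleton 1)).inter mX
        have hI : I1 = ∫ ω in {ω | S1 ω = 1 ∧ X ω = x} ∩ {ω | S0 ω = 1}, Y1 ω ∂μ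
            + ∫ ω in {ω | S1 ω = 1 ∧ X ω = x} \ {ω | S0 ω = 1}, Y1 ω ∂μ := by
          rw [hI1def]
          conv_lhs => rw [← Set.inter_union_diff {ω | S1 ω = 1 ∧ X ω = x} {ω | S0 ω = 1}]
          exact setIntegral_union (Set.disjoint_left.mpr fun ω h1 h2 => h2.2 h1.2)
            (hmB.diff mS0set) hint.integrableOn hint.integrableOn
        have hz : ∫ ω in {ω | S1 ω = 1 ∧ X ω = x} \ {ω | S0 ω = 1}, Y1 ω ∂μ = 0 := by
          rw [show μ.restrict ({ω | S1 ω = 1 ∧ X ω = x} \ {ω | S0 ω = 1}) = 0 from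
            Measure.restrict_eq_zero.mpr hnull, integral_zero_measure]
        have hseteq : {ω | S1 ω = 1 ∧ X ω = x} ∩ {ω | S0 ω = 1}
            = {ω | S0 ω = 1 ∧ S1 ω = 1 ∧ X ω = x} := by
          ext ω
          simp only [Set.mem_inter_iff, Set.mem_setOf_eq]
          tauto
        rw [hI, hz, add_zero, hseteq]
      have hJx : J x = I1 + K := by
        simp only [hJdef]
        conv_lhs => rw [hsetu0]
        rw [setIntegral_union hdisjG hmG0 hint.integrableOn hint.integrableOn, hI1']
      -- conditional means
      have hcexp : ∀ s : ℝ,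
          cexp μ Y {ω | Z ω = 1 ∧ S ω = s ∧ X ω = x}
            = (∫ ω in {ω | S1 ω = s ∧ X ω = x}, Y1 ω ∂μ) / Pr μ {ω | S1 ω = s ∧ X ω = x} := by
        intro s
        have hset : {ω | Z ω = 1 ∧ S ω = s ∧ X ω = x}
            = Z ⁻¹' {1} ∩ W ⁻¹' {p | p.2.2.1 = s ∧ p.1 = x} := by
          ext ω
          simp only [Set.mem_setOf_eq, Set.mem_inter_iff, Set.mem_preimage,
            Set.mem_singleton_iff, hW]
          constructor
          · rintro ⟨h1, h2, h3⟩
            exact ⟨h1, by rw [← hScons1 ω h1]; exact h2, h3⟩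
          · rintro ⟨h1, h2, h3⟩
            exact ⟨h1, by rw [hScons1 ω h1]; exact h2, h3⟩
        have hYY1 : Set.EqOn Y Y1 (Z ⁻¹' {1} ∩ W ⁻¹' {p | p.2.2.1 = s ∧ p.1 = x}) :=
          fun ω hω => by
            have h1 : Z ω = 1 := hω.1
            rw [hconsY, if_pos h1]
        have hmA : MeasurableSet (Z ⁻¹' {1} ∩ W ⁻¹' {p | p.2.2.1 = s ∧ p.1 = x}) :=
          (hZm (measurableSet_singleton 1)).inter (hWm (mT1 s))
        rw [cexp, hset, setIntegral_congr_fun hmA hYY1, hII _ (mT1 s), hPr2 1 _ (mT1 s),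
          mul_div_mul_left _ _ (ne_of_gt ha1)]
        rfl
      have hm11eq : m11 x * p1 = I1 := by
        rw [hm11 x, hcexp 1, ← hI1def, ← hp1def]
        exact div_mul_cancel₀ _ (ne_of_gt hp1pos)
      have hm10eq : m10 x * q = I0 := by
        rw [hm10 x, hcexp 0, ← hI0def, ← hqdef]
        exact div_mul_cancel₀ _ (ne_of_gt hqpos)
      -- partial principal ignorability
      have hKq : K * q = I0 * r := by
        have happ := ppi_aux μ Y1 hY1m
          ({ω | S0 ω = 1} ∩ {ω | X ω = x ∧ S1 ω = 0}) {ω | X ω = x ∧ S1 ω = 0}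
          (by
            intro B hB
            have e1 : Y1 ⁻¹' B ∩ ({ω | S0 ω = 1} ∩ {ω | X ω = x ∧ S1 ω = 0})
                = {ω | Y1 ω ∈ B ∧ S0 ω = 1} ∩ {ω | X ω = x ∧ S1 ω = 0} := by
              ext ω
              simp only [Set.mem_inter_iff, Set.mem_preimage, Set.mem_setOf_eq]
              tauto
            rw [e1]
            exact hPPI x B hB 1)
        have eC : ({ω | X ω = x ∧ S1 ω = 0} : Set Ω) = {ω | S1 ω = 0 ∧ X ω = x} := by
          ext ω
          simp only [Set.mem_setOf_eq]
          tauto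
        have eA : ({ω | S0 ω = 1} ∩ {ω | X ω = x ∧ S1 ω = 0} : Set Ω)
            = {ω | S0 ω = 1 ∧ S1 ω = 0 ∧ X ω = x} := by
          ext ω
          simp only [Set.mem_inter_iff, Set.mem_setOf_eq]
          tauto
        rw [eA, eC] at happ
        rw [hKdef, hqdef, hI0def, hrdef]
        simp only [Pr]
        exact happ
      have hKv : K = m10 x * r := by
        have h1 : K * q = (m10 x * r) * q := by
          rw [hKq, ← hm10eq]; ring
        exact mul_right_cancel₀ (ne_of_gt hqpos) h1
      have hJv : J x = m11 x * p1 + m10 x * (p0 - p1) := by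
        rw [hJx, ← hm11eq, hKv, hrv]
      rw [hρ0eq, hρ1eq, hJv]
      have hrbne : rbar0 ≠ 0 := ne_of_gt hrpos
      have hp0ne : p0 ≠ 0 := ne_of_gt hp0pos
      field_simp
  -- summing over x
  have hUsum : HasSum J (∫ ω in {ω | S0 ω = 1}, Y1 ω ∂μ) := by
    have hm : ∀ x : ℕ, MeasurableSet {ω | S0 ω = 1 ∧ X ω = x} := fun x =>
      (hS0m (measurableSet_singleton 1)).inter (hXm (measurableSet_singleton x))
    have hd : Pairwise (Function.onFun Disjoint fun x : ℕ => {ω | S0 ω = 1 ∧ X ω = x}) := by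
      intro a b hab
      simp only [Function.onFun]
      exact Set.disjoint_left.mpr fun ω h1 h2 => hab (h1.2.symm.trans h2.2)
    have hU : (⋃ x : ℕ, {ω | S0 ω = 1 ∧ X ω = x}) = {ω | S0 ω = 1} := by
      ext ω
      simp only [Set.mem_iUnion, Set.mem_setOf_eq]
      exact ⟨fun ⟨x, h, _⟩ => h, fun h => ⟨X ω, h, rfl⟩⟩
    have := hasSum_integral_iUnion hm hd (hint.integrableOn)
    rwa [hU] at this
  calc cexp μ Y1 {ω | S0 ω = 1} = (∫ ω in {ω | S0 ω = 1}, Y1 ω ∂μ) / rbar0 := by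
        rw [cexp, hb]
    _ = ∑' x : ℕ, J x / rbar0 := ((hUsum.div_const rbar0).tsum_eq).symm
    _ = _ := tsum_congr fun x => (hterm x).symm
end

section
/- If an infection-necessary outcome satisfies Y = 0 whenever S = 0 (almost surely), then under randomization, consistency, and monotonicity, E[Y(1) | S(0)=1] = E[Y | Z=1, S=1] · ρ̄_1 / ρ̄_0, where ρ̄_z = P(S=1 | Z=z). -/
open MeasureTheory ProbabilityTheory

/-- For an infection-necessary outcome (`Y(1)=0` a.s. when `S(1)=0`), the Naturally Infected
mean under vaccine is point identified: `E[Y(1)|S(0)=1] = E[Y|Z=1,S=1]·ρ̄₁/ρ̄₀`. -/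
theorem id_EY1_infection_necessary
    {Ω : Type*} [MeasurableSpace Ω] (μ : Measure Ω) [IsProbabilityMeasure μ]
    (Z S0 S1 Y0 Y1 S Y : Ω → ℝ) (ρ0 ρ1 : ℝ)
    (hZm : Measurable Z) (hS0m : Measurable S0) (hS1m : Measurable S1)
    (hY0m : Measurable Y0) (hY1m : Measurable Y1)
    (hZ : ∀ ω, Z ω = 0 ∨ Z ω = 1)
    (hS0 : ∀ ω, S0 ω = 0 ∨ S0 ω = 1) (hS1 : ∀ ω, S1 ω = 0 ∨ S1 ω = 1)
    (hindep : IndepFun Z (fun ω => (S0 ω, S1 ω, Y0 ω, Y1 ω)) μ)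
    (hconsS : ∀ ω, S ω = if Z ω = 1 then S1 ω else S0 ω)
    (hconsY : ∀ ω, Y ω = if Z ω = 1 then Y1 ω else Y0 ω)
    (hmono : ∀ᵐ ω ∂μ, S1 ω ≤ S0 ω)
    (hnec : ∀ᵐ ω ∂μ, S1 ω = 0 → Y1 ω = 0)
    (hint : Integrable Y1 μ)
    (hρ0 : ρ0 = Pr μ {ω | S ω = 1 ∧ Z ω = 0} / Pr μ {ω | Z ω = 0})
    (hρ1 : ρ1 = Pr μ {ω | S ω = 1 ∧ Z ω = 1} / Pr μ {ω | Z ω = 1})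
    (hpos0 : 0 < Pr μ {ω | Z ω = 0}) (hpos1 : 0 < Pr μ {ω | Z ω = 1})
    (hρ0pos : 0 < ρ0)
    (hpos11 : 0 < Pr μ {ω | Z ω = 1 ∧ S ω = 1}) :
    cexp μ Y1 {ω | S0 ω = 1}
      = cexp μ Y {ω | Z ω = 1 ∧ S ω = 1} * ρ1 / ρ0 := by
  classical
  set T : Ω → ℝ × ℝ × ℝ × ℝ := fun ω => (S0 ω, S1 ω, Y0 ω, Y1 ω) with hT
  have hTm : Measurable T := (hS0m.prodMk (hS1m.prodMk (hY0m.prodMk hY1m)))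
  -- basic measurable sets
  have hB0 : MeasurableSet {p : ℝ × ℝ × ℝ × ℝ | p.1 = 1} :=
    measurable_fst (measurableSet_singleton 1)
  have hB1 : MeasurableSet {p : ℝ × ℝ × ℝ × ℝ | p.2.1 = 1} :=
    (measurable_fst.comp measurable_snd) (measurableSet_singleton 1)
  have hZ1 : MeasurableSet (Z ⁻¹' {1}) := hZm (measurableSet_singleton 1)
  have hZ0 : MeasurableSet (Z ⁻¹' {0}) := hZm (measurableSet_singleton 0)
  have hA1 : MeasurableSet {ω | S1 ω = 1} := hS1m (measurableSet_singleton 1)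
  have hA0 : MeasurableSet {ω | S0 ω = 1} := hS0m (measurableSet_singleton 1)
  -- set identities
  have hset0 : {ω | S ω = 1 ∧ Z ω = 0} = Z ⁻¹' {0} ∩ T ⁻¹' {p | p.1 = 1} := by
    ext ω
    have hs := hconsS ω
    constructor
    · rintro ⟨h1, h2⟩
      rw [h2] at hs; norm_num at hs
      exact ⟨h2, show S0 ω = 1 by rw [← hs]; exact h1⟩
    · rintro ⟨h2, h1⟩
      simp only [Set.mem_preimage, Set.mem_singleton_iff] at h2
      rw [h2] at hs; norm_num at hs
      exact ⟨by rw [hs]; exact h1, h2⟩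
  have hset1 : {ω | S ω = 1 ∧ Z ω = 1} = Z ⁻¹' {1} ∩ T ⁻¹' {p | p.2.1 = 1} := by
    ext ω
    have hs := hconsS ω
    constructor
    · rintro ⟨h1, h2⟩
      rw [if_pos h2] at hs
      exact ⟨h2, show S1 ω = 1 by rw [← hs]; exact h1⟩
    · rintro ⟨h2, h1⟩
      simp only [Set.mem_preimage, Set.mem_singleton_iff] at h2
      rw [if_pos h2] at hs
      exact ⟨by rw [hs]; exact h1, h2⟩
  have hset1' : {ω | Z ω = 1 ∧ S ω = 1} = Z ⁻¹' {1} ∩ T ⁻¹' {p | p.2.1 = 1} := by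
    rw [← hset1]; ext ω; exact and_comm
  -- independence of events
  have hind0 : μ ({ω | S ω = 1 ∧ Z ω = 0}) = μ (Z ⁻¹' {0}) * μ {ω | S0 ω = 1} := by
    rw [hset0, hindep.measure_inter_preimage_eq_mul _ _ (measurableSet_singleton 0) hB0]
    rfl
  have hind1 : μ ({ω | Z ω = 1 ∧ S ω = 1}) = μ (Z ⁻¹' {1}) * μ {ω | S1 ω = 1} := by
    rw [hset1', hindep.measure_inter_preimage_eq_mul _ _ (measurableSet_singleton 1) hB1]
    rfl
  -- notation
  set a : ℝ := (μ (Z ⁻¹' {1})).toReal with ha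
  set b : ℝ := (μ {ω | S1 ω = 1}).toReal with hb
  set c : ℝ := (μ {ω | S0 ω = 1}).toReal with hc
  have hPr11 : Pr μ {ω | Z ω = 1 ∧ S ω = 1} = a * b := by
    rw [Pr, hind1, ENNReal.toReal_mul]
  have hPrZ1 : Pr μ {ω | Z ω = 1} = a := by
    rw [Pr, ha]; congr 1
  have hPrZ0 : Pr μ {ω | Z ω = 0} = (μ (Z ⁻¹' {0})).toReal := rfl
  have haPos : 0 < a := by rwa [hPrZ1] at hpos1
  have habPos : 0 < a * b := by rwa [hPr11] at hpos11
  have hbPos : 0 < b := by nlinarith [haPos]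
  have hρ1' : ρ1 = b := by
    have : Pr μ {ω | S ω = 1 ∧ Z ω = 1} = a * b := by
      rw [Pr]
      have : {ω | S ω = 1 ∧ Z ω = 1} = {ω | Z ω = 1 ∧ S ω = 1} := by
        ext ω; exact and_comm
      rw [this, hind1, ENNReal.toReal_mul]
    rw [hρ1, this, hPrZ1, mul_comm, mul_div_assoc, div_self haPos.ne', mul_one]
  have hρ0' : ρ0 = c := by
    have h : Pr μ {ω | S ω = 1 ∧ Z ω = 0} = Pr μ {ω | Z ω = 0} * c := by
      rw [Pr, hind0, ENNReal.toReal_mul]; rfl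
    rw [hρ0, h, mul_comm, mul_div_assoc, div_self hpos0.ne', mul_one]
  -- the key functions
  set f : Ω → ℝ := (Z ⁻¹' {1}).indicator (fun _ => (1 : ℝ)) with hf
  set g : Ω → ℝ := {ω | S1 ω = 1}.indicator Y1 with hg
  have hfφ : f = (fun x : ℝ => ({(1:ℝ)} : Set ℝ).indicator (fun _ => (1:ℝ)) x) ∘ Z := by
    ext ω; simp [hf, Set.indicator]
  have hgψ : g = (fun p : ℝ × ℝ × ℝ × ℝ =>
      {p : ℝ × ℝ × ℝ × ℝ | p.2.1 = 1}.indicator (fun q => q.2.2.2) p) ∘ T := by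
    ext ω; simp [hg, hT, Set.indicator]
  have hfg : IndepFun f g μ := by
    rw [hfφ, hgψ]
    exact hindep.comp
      ((measurable_const).indicator (measurableSet_singleton 1))
      ((measurable_snd.comp (measurable_snd.comp measurable_snd)).indicator hB1)
  have hfi : Integrable f μ := (integrable_const (1:ℝ)).indicator hZ1
  have hgi : Integrable g μ := hint.indicator hA1
  have hmul : ∫ ω, f ω * g ω ∂μ = (∫ ω, f ω ∂μ) * ∫ ω, g ω ∂μ :=
    hfg.integral_fun_mul_eq_mul_integral hfi.aestronglyMeasurable hgi.aestronglyMeasurable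
  have hfint : ∫ ω, f ω ∂μ = a := by
    rw [hf, integral_indicator hZ1]
    simp [ha, Measure.real]
  -- ∫ f*g = ∫ over {Z=1 ∧ S1=1} Y1
  have hfg_int : ∫ ω, f ω * g ω ∂μ = ∫ ω in Z ⁻¹' {1} ∩ {ω | S1 ω = 1}, Y1 ω ∂μ := by
    have : (fun ω => f ω * g ω) = (Z ⁻¹' {1}).indicator g := by
      ext ω; simp [hf, Set.indicator]
    rw [this, integral_indicator hZ1, hg, setIntegral_indicator hA1]
  -- ∫ over {Z=1 ∧ S=1} Y equals that
  have hYint : ∫ ω in {ω | Z ω = 1 ∧ S ω = 1}, Y ω ∂μ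
      = ∫ ω in Z ⁻¹' {1} ∩ {ω | S1 ω = 1}, Y1 ω ∂μ := by
    have hseteq : {ω | Z ω = 1 ∧ S ω = 1} = Z ⁻¹' {1} ∩ {ω | S1 ω = 1} := by
      rw [hset1']
      ext ω
      simp only [Set.mem_inter_iff, Set.mem_preimage, Set.mem_singleton_iff, Set.mem_setOf_eq]
      exact Iff.rfl
    rw [hseteq]
    refine setIntegral_congr_fun (hZ1.inter hA1) ?_
    intro ω hω
    rw [hconsY ω, if_pos (show Z ω = 1 from hω.1)]
  -- a.e. identity: indicator over S1=1 equals indicator over S0=1 for Y1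
  have hae : {ω | S1 ω = 1}.indicator Y1 =ᵐ[μ] {ω | S0 ω = 1}.indicator Y1 := by
    filter_upwards [hmono, hnec] with ω hm hn
    rcases hS1 ω with h1 | h1
    · rw [Set.indicator_of_notMem (by simp [Set.mem_setOf_eq, h1])]
      rcases hS0 ω with h0 | h0
      · rw [Set.indicator_of_notMem (by simp [Set.mem_setOf_eq, h0])]
      · rw [Set.indicator_of_mem (show ω ∈ {ω | S0 ω = 1} from h0)]
        exact (hn h1).symm
    · have h0 : S0 ω = 1 := by
        rcases hS0 ω with h0 | h0
        · rw [h1, h0] at hm; norm_num at hm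
        · exact h0
      rw [Set.indicator_of_mem (by simpa [Set.mem_setOf_eq] using h1),
        Set.indicator_of_mem (by simpa [Set.mem_setOf_eq] using h0)]
  have hI : ∫ ω in {ω | S0 ω = 1}, Y1 ω ∂μ = ∫ ω, g ω ∂μ := by
    rw [hg, ← integral_indicator hA0]
    exact (integral_congr_ae hae).symm
  set I : ℝ := ∫ ω, g ω ∂μ with hIdef
  -- positivity facts
  have hcPos : 0 < c := hρ0' ▸ hρ0pos
  -- assemble
  rw [cexp, cexp, hPr11, hYint, ← hfg_int, hmul, hfint, hI, Pr, ← hc, hρ1', hρ0']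
  field_simp
end

section
/- Under randomization, consistency, monotonicity, and the sensitivity assumption E[Y(1) | S(1)=0, S(0)=0, X=x] = ε · E[Y(1) | S(1)=0, S(0)=1, X=x] for a constant ε > 0, the Protected-stratum conditional mean is identified: E[Y(1) | S(1)=0, S(0)=1, X=x] = μ_10(x) · (1 − ρ_1(x)) / [ε(1 − ρ_0(x)) + ρ_0(x) − ρ_1(x)], where μ_10(x) = E[Y | Z=1, S=0, X=x] and ρ_z(x) = P(S=1 | Z=z, X=x). -/
open MeasureTheory ProbabilityTheory

/-- Sensitivity-analysis identification of the Protected-stratum conditional mean under the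
assumption `E[Y(1)|S(1)=0,S(0)=0,X=x] = ε · E[Y(1)|S(1)=0,S(0)=1,X=x]`. -/
theorem id_protected_mean_sensitivity
    {Ω : Type*} [MeasurableSpace Ω] (μ : Measure Ω) [IsProbabilityMeasure μ]
    (X : Ω → ℕ) (Z S0 S1 Y0 Y1 S Y : Ω → ℝ) (x : ℕ) (ε m10x ρ0x ρ1x : ℝ)
    (hXm : Measurable X) (hZm : Measurable Z)
    (hS0m : Measurable S0) (hS1m : Measurable S1)
    (hY0m : Measurable Y0) (hY1m : Measurable Y1)
    (hZ : ∀ ω, Z ω = 0 ∨ Z ω = 1)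
    (hS0 : ∀ ω, S0 ω = 0 ∨ S0 ω = 1) (hS1 : ∀ ω, S1 ω = 0 ∨ S1 ω = 1)
    (hindep : IndepFun Z (fun ω => (X ω, S0 ω, S1 ω, Y0 ω, Y1 ω)) μ)
    (hconsS : ∀ ω, S ω = if Z ω = 1 then S1 ω else S0 ω)
    (hconsY : ∀ ω, Y ω = if Z ω = 1 then Y1 ω else Y0 ω)
    (hmono : ∀ᵐ ω ∂μ, S1 ω ≤ S0 ω)
    (hint : Integrable Y1 μ)
    (hε : 0 < ε)
    (hsens : cexp μ Y1 {ω | S1 ω = 0 ∧ S0 ω = 0 ∧ X ω = x}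
      = ε * cexp μ Y1 {ω | S1 ω = 0 ∧ S0 ω = 1 ∧ X ω = x})
    (hm10x : m10x = cexp μ Y {ω | Z ω = 1 ∧ S ω = 0 ∧ X ω = x})
    (hρ0x : ρ0x = Pr μ {ω | S ω = 1 ∧ Z ω = 0 ∧ X ω = x} / Pr μ {ω | Z ω = 0 ∧ X ω = x})
    (hρ1x : ρ1x = Pr μ {ω | S ω = 1 ∧ Z ω = 1 ∧ X ω = x} / Pr μ {ω | Z ω = 1 ∧ X ω = x})
    (hposZ1 : 0 < Pr μ {ω | Z ω = 1 ∧ X ω = x})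
    (hposZ0 : 0 < Pr μ {ω | Z ω = 0 ∧ X ω = x})
    (hρ1lt : ρ1x < 1) (hρlt : ρ1x < ρ0x)
    (hposI : 0 < Pr μ {ω | S1 ω = 0 ∧ S0 ω = 0 ∧ X ω = x})
    (hposP : 0 < Pr μ {ω | S1 ω = 0 ∧ S0 ω = 1 ∧ X ω = x})
    (hden : 0 < ε * (1 - ρ0x) + ρ0x - ρ1x) :
    cexp μ Y1 {ω | S1 ω = 0 ∧ S0 ω = 1 ∧ X ω = x}
      = m10x * (1 - ρ1x) / (ε * (1 - ρ0x) + ρ0x - ρ1x) := by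
  classical
  set V : Ω → ℕ × ℝ × ℝ × ℝ × ℝ := fun ω => (X ω, S0 ω, S1 ω, Y0 ω, Y1 ω) with hVdef
  have hVm : Measurable V := hXm.prodMk (hS0m.prodMk (hS1m.prodMk (hY0m.prodMk hY1m)))
  -- probability factorization through independence
  have hPrfact : ∀ (z : ℝ) (T : Set (ℕ × ℝ × ℝ × ℝ × ℝ)), MeasurableSet T →
      Pr μ (Z ⁻¹' {z} ∩ V ⁻¹' T) = Pr μ (Z ⁻¹' {z}) * Pr μ (V ⁻¹' T) := by
    intro z T hT
    unfold Pr
    rw [hindep.measure_inter_preimage_eq_mul _ _ (measurableSet_singleton z) hT,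
      ENNReal.toReal_mul]
  -- integral factorization through independence
  have hIfact : ∀ (T : Set (ℕ × ℝ × ℝ × ℝ × ℝ)), MeasurableSet T →
      (∫ ω in Z ⁻¹' ({1} : Set ℝ) ∩ V ⁻¹' T, Y1 ω ∂μ)
        = Pr μ (Z ⁻¹' ({1} : Set ℝ)) * ∫ ω in V ⁻¹' T, Y1 ω ∂μ := by
    intro T hT
    have hproj : Measurable (fun v : ℕ × ℝ × ℝ × ℝ × ℝ => v.2.2.2.2) := by fun_prop
    have hInd : IndepFun ((Set.indicator ({1} : Set ℝ) (fun _ => (1 : ℝ))) ∘ Z)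
        ((Set.indicator T (fun v : ℕ × ℝ × ℝ × ℝ × ℝ => v.2.2.2.2)) ∘ V) μ :=
      hindep.comp (measurable_const.indicator (measurableSet_singleton 1)) (hproj.indicator hT)
    have e1 : (Set.indicator ({1} : Set ℝ) (fun _ => (1 : ℝ))) ∘ Z
        = Set.indicator (Z ⁻¹' {1}) (fun _ => (1 : ℝ)) := by
      funext ω
      by_cases h : Z ω ∈ ({1} : Set ℝ) <;>
        simp [Set.indicator, h, Function.comp]
    have e2 : (Set.indicator T (fun v : ℕ × ℝ × ℝ × ℝ × ℝ => v.2.2.2.2)) ∘ V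
        = Set.indicator (V ⁻¹' T) Y1 := by
      funext ω
      by_cases h : V ω ∈ T <;>
        simp [Set.indicator, h, Function.comp, hVdef]
    rw [e1, e2] at hInd
    have hmZ1 : MeasurableSet (Z ⁻¹' ({1} : Set ℝ)) := hZm (measurableSet_singleton 1)
    have hmVT : MeasurableSet (V ⁻¹' T) := hVm hT
    have hi1 : Integrable (Set.indicator (Z ⁻¹' ({1} : Set ℝ)) (fun _ => (1 : ℝ))) μ :=
      (integrable_const (1 : ℝ)).indicator hmZ1
    have hi2 : Integrable (Set.indicator (V ⁻¹' T) Y1) μ := hint.indicator hmVT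
    have hmul := hInd.integral_mul_eq_mul_integral hi1.aestronglyMeasurable hi2.aestronglyMeasurable
    have e3 : (Set.indicator (Z ⁻¹' ({1} : Set ℝ)) (fun _ => (1 : ℝ)))
        * Set.indicator (V ⁻¹' T) Y1
        = Set.indicator (Z ⁻¹' ({1} : Set ℝ) ∩ V ⁻¹' T) Y1 := by
      funext ω
      rw [Pi.mul_apply, ← Set.inter_indicator_mul]
      simp
    rw [e3] at hmul
    rw [← integral_indicator (hmZ1.inter hmVT), hmul,
      integral_indicator_const (1 : ℝ) hmZ1, integral_indicator hmVT]
    simp [Pr, Measure.real]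
  -- measurable sets in the product space
  have mTx : MeasurableSet {v : ℕ × ℝ × ℝ × ℝ × ℝ | v.1 = x} :=
    measurable_fst (measurableSet_singleton x)
  have mT1 : MeasurableSet {v : ℕ × ℝ × ℝ × ℝ × ℝ | v.2.2.1 = 1 ∧ v.1 = x} :=
    (measurable_snd.snd.fst (measurableSet_singleton 1)).inter
      (measurable_fst (measurableSet_singleton x))
  have mT0 : MeasurableSet {v : ℕ × ℝ × ℝ × ℝ × ℝ | v.2.1 = 1 ∧ v.1 = x} :=
    (measurable_snd.fst (measurableSet_singleton 1)).inter
      (measurable_fst (measurableSet_singleton x))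
  have mTN : MeasurableSet {v : ℕ × ℝ × ℝ × ℝ × ℝ | v.2.2.1 = 0 ∧ v.1 = x} :=
    (measurable_snd.snd.fst (measurableSet_singleton 0)).inter
      (measurable_fst (measurableSet_singleton x))
  -- basic probabilities
  have h01 : (0 : ℝ) ≠ 1 := by norm_num
  have hZ1X : Pr μ {ω | Z ω = 1 ∧ X ω = x}
      = Pr μ (Z ⁻¹' ({1} : Set ℝ)) * Pr μ {ω | X ω = x} := hPrfact 1 _ mTx
  have hZ0X : Pr μ {ω | Z ω = 0 ∧ X ω = x}
      = Pr μ (Z ⁻¹' ({0} : Set ℝ)) * Pr μ {ω | X ω = x} := hPrfact 0 _ mTx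
  have hPrnn : ∀ A : Set Ω, 0 ≤ Pr μ A := fun A => ENNReal.toReal_nonneg
  have hpz1 : 0 < Pr μ (Z ⁻¹' ({1} : Set ℝ)) := by
    rcases mul_pos_iff.mp (hZ1X ▸ hposZ1) with ⟨h, _⟩ | ⟨h, _⟩
    · exact h
    · exact absurd h (not_lt.mpr (hPrnn _))
  have hpz0 : 0 < Pr μ (Z ⁻¹' ({0} : Set ℝ)) := by
    rcases mul_pos_iff.mp (hZ0X ▸ hposZ0) with ⟨h, _⟩ | ⟨h, _⟩
    · exact h
    · exact absurd h (not_lt.mpr (hPrnn _))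
  have hpx : 0 < Pr μ {ω | X ω = x} := by
    rcases mul_pos_iff.mp (hZ1X ▸ hposZ1) with ⟨_, h⟩ | ⟨_, h⟩
    · exact h
    · exact absurd h (not_lt.mpr (hPrnn _))
  -- rewrite the S-sets in terms of S1, S0
  have eS1 : {ω | S ω = 1 ∧ Z ω = 1 ∧ X ω = x}
      = {ω | Z ω = 1 ∧ (S1 ω = 1 ∧ X ω = x)} := by
    ext ω
    simp only [Set.mem_setOf_eq, hconsS ω]
    constructor
    · rintro ⟨h1, h2, h3⟩; rw [if_pos h2] at h1; exact ⟨h2, h1, h3⟩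
    · rintro ⟨h2, h1, h3⟩; rw [if_pos h2]; exact ⟨h1, h2, h3⟩
  have eS0 : {ω | S ω = 1 ∧ Z ω = 0 ∧ X ω = x}
      = {ω | Z ω = 0 ∧ (S0 ω = 1 ∧ X ω = x)} := by
    ext ω
    simp only [Set.mem_setOf_eq, hconsS ω]
    constructor
    · rintro ⟨h1, h2, h3⟩; rw [if_neg (by rw [h2]; norm_num)] at h1; exact ⟨h2, h1, h3⟩
    · rintro ⟨h2, h1, h3⟩; rw [if_neg (by rw [h2]; norm_num)]; exact ⟨h1, h2, h3⟩
  have eE : {ω | Z ω = 1 ∧ S ω = 0 ∧ X ω = x}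
      = {ω | Z ω = 1 ∧ (S1 ω = 0 ∧ X ω = x)} := by
    ext ω
    simp only [Set.mem_setOf_eq, hconsS ω]
    constructor
    · rintro ⟨h2, h1, h3⟩; rw [if_pos h2] at h1; exact ⟨h2, h1, h3⟩
    · rintro ⟨h2, h1, h3⟩; rw [if_pos h2]; exact ⟨h2, h1, h3⟩
  -- abbreviations for stratum probabilities
  set a := Pr μ {ω | S1 ω = 0 ∧ S0 ω = 0 ∧ X ω = x} with ha_def
  set b := Pr μ {ω | S1 ω = 0 ∧ S0 ω = 1 ∧ X ω = x} with hb_def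
  set c := Pr μ {ω | S1 ω = 1 ∧ S0 ω = 1 ∧ X ω = x} with hc_def
  -- Pr of the "defier" set is zero by monotonicity
  have hM0 : Pr μ {ω | S1 ω = 1 ∧ S0 ω = 0 ∧ X ω = x} = 0 := by
    have hsub : {ω | S1 ω = 1 ∧ S0 ω = 0 ∧ X ω = x} ⊆ {ω | ¬ S1 ω ≤ S0 ω} := by
      intro ω hω
      simp only [Set.mem_setOf_eq] at hω ⊢
      rw [hω.1, hω.2.1]; norm_num
    have : μ {ω | S1 ω = 1 ∧ S0 ω = 0 ∧ X ω = x} = 0 :=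
      measure_mono_null hsub (ae_iff.mp hmono)
    simp [Pr, this]
  -- generic union splitting for Pr
  have hPr_union : ∀ {P Q R : Set Ω}, P = Q ∪ R → Disjoint Q R → MeasurableSet R →
      Pr μ P = Pr μ Q + Pr μ R := by
    intro P Q R hPQR hdisj hR
    unfold Pr
    rw [hPQR, measure_union hdisj hR,
      ENNReal.toReal_add (measure_ne_top μ Q) (measure_ne_top μ R)]
  -- measurability of Ω-level strata
  have mA : MeasurableSet {ω | S1 ω = 0 ∧ S0 ω = 0 ∧ X ω = x} :=
    (hS1m (measurableSet_singleton 0)).inter ((hS0m (measurableSet_singleton 0)).inter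
      (hXm (measurableSet_singleton x)))
  have mB : MeasurableSet {ω | S1 ω = 0 ∧ S0 ω = 1 ∧ X ω = x} :=
    (hS1m (measurableSet_singleton 0)).inter ((hS0m (measurableSet_singleton 1)).inter
      (hXm (measurableSet_singleton x)))
  have mC : MeasurableSet {ω | S1 ω = 1 ∧ S0 ω = 1 ∧ X ω = x} :=
    (hS1m (measurableSet_singleton 1)).inter ((hS0m (measurableSet_singleton 1)).inter
      (hXm (measurableSet_singleton x)))
  have mM : MeasurableSet {ω | S1 ω = 1 ∧ S0 ω = 0 ∧ X ω = x} :=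
    (hS1m (measurableSet_singleton 1)).inter ((hS0m (measurableSet_singleton 0)).inter
      (hXm (measurableSet_singleton x)))
  have mS1eq1 : MeasurableSet {ω | S1 ω = 1 ∧ X ω = x} :=
    (hS1m (measurableSet_singleton 1)).inter (hXm (measurableSet_singleton x))
  have mS0eq1 : MeasurableSet {ω | S0 ω = 1 ∧ X ω = x} :=
    (hS0m (measurableSet_singleton 1)).inter (hXm (measurableSet_singleton x))
  -- partitions
  have pN : {ω | S1 ω = 0 ∧ X ω = x}
      = {ω | S1 ω = 0 ∧ S0 ω = 0 ∧ X ω = x} ∪ {ω | S1 ω = 0 ∧ S0 ω = 1 ∧ X ω = x} := by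
    ext ω
    simp only [Set.mem_setOf_eq, Set.mem_union]
    rcases hS0 ω with h | h <;> rw [h] <;> norm_num
  have dAB : Disjoint {ω | S1 ω = 0 ∧ S0 ω = 0 ∧ X ω = x}
      {ω | S1 ω = 0 ∧ S0 ω = 1 ∧ X ω = x} := by
    rw [Set.disjoint_left]
    intro ω h1 h2
    have := h1.2.1
    have h2' := h2.2.1
    rw [this] at h2'
    norm_num at h2'
  have pS1 : {ω | S1 ω = 1 ∧ X ω = x}
      = {ω | S1 ω = 1 ∧ S0 ω = 1 ∧ X ω = x} ∪ {ω | S1 ω = 1 ∧ S0 ω = 0 ∧ X ω = x} := by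
    ext ω
    simp only [Set.mem_setOf_eq, Set.mem_union]
    rcases hS0 ω with h | h <;> rw [h] <;> norm_num
  have dCM : Disjoint {ω | S1 ω = 1 ∧ S0 ω = 1 ∧ X ω = x}
      {ω | S1 ω = 1 ∧ S0 ω = 0 ∧ X ω = x} := by
    rw [Set.disjoint_left]
    intro ω h1 h2
    have := h1.2.1
    have h2' := h2.2.1
    rw [this] at h2'
    norm_num at h2'
  have pS0 : {ω | S0 ω = 1 ∧ X ω = x}
      = {ω | S1 ω = 0 ∧ S0 ω = 1 ∧ X ω = x} ∪ {ω | S1 ω = 1 ∧ S0 ω = 1 ∧ X ω = x} := by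
    ext ω
    simp only [Set.mem_setOf_eq, Set.mem_union]
    rcases hS1 ω with h | h <;> rw [h] <;> norm_num
  have dBC : Disjoint {ω | S1 ω = 0 ∧ S0 ω = 1 ∧ X ω = x}
      {ω | S1 ω = 1 ∧ S0 ω = 1 ∧ X ω = x} := by
    rw [Set.disjoint_left]
    intro ω h1 h2
    have := h1.1
    have h2' := h2.1
    rw [this] at h2'
    norm_num at h2'
  have pX : {ω | X ω = x} = {ω | S1 ω = 0 ∧ X ω = x} ∪ {ω | S1 ω = 1 ∧ X ω = x} := by
    ext ω
    simp only [Set.mem_setOf_eq, Set.mem_union]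
    rcases hS1 ω with h | h <;> rw [h] <;> norm_num
  have dNX : Disjoint {ω | S1 ω = 0 ∧ X ω = x} {ω | S1 ω = 1 ∧ X ω = x} := by
    rw [Set.disjoint_left]
    intro ω h1 h2
    have := h1.1
    have h2' := h2.1
    rw [this] at h2'
    norm_num at h2'
  -- numeric stratum identities
  have hn : Pr μ {ω | S1 ω = 0 ∧ X ω = x} = a + b := hPr_union pN dAB mB
  have hs1 : Pr μ {ω | S1 ω = 1 ∧ X ω = x} = c := by
    rw [hPr_union pS1 dCM mM, hM0, add_zero]
  have hs0 : Pr μ {ω | S0 ω = 1 ∧ X ω = x} = b + c := hPr_union pS0 dBC mC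
  have hpxdec : Pr μ {ω | X ω = x} = (a + b) + c := by
    rw [hPr_union pX dNX mS1eq1, hn, hs1]
  -- positivity
  have ha : 0 < a := hposI
  have hb : 0 < b := hposP
  have hab : 0 < a + b := by linarith
  have hc : 0 ≤ c := hPrnn _
  set px := Pr μ {ω | X ω = x} with hpx_def
  -- identify ρ1x and ρ0x
  have hρ1 : ρ1x = c / px := by
    have h2 : Pr μ {ω | Z ω = 1 ∧ S1 ω = 1 ∧ X ω = x}
        = Pr μ (Z ⁻¹' ({1} : Set ℝ)) * Pr μ {ω | S1 ω = 1 ∧ X ω = x} := hPrfact 1 _ mT1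
    rw [hρ1x, eS1, h2, hZ1X, hs1, mul_div_mul_left _ _ (ne_of_gt hpz1)]
  have hρ0 : ρ0x = (b + c) / px := by
    have h2 : Pr μ {ω | Z ω = 0 ∧ S0 ω = 1 ∧ X ω = x}
        = Pr μ (Z ⁻¹' ({0} : Set ℝ)) * Pr μ {ω | S0 ω = 1 ∧ X ω = x} := hPrfact 0 _ mT0
    rw [hρ0x, eS0, h2, hZ0X, hs0, mul_div_mul_left _ _ (ne_of_gt hpz0)]
  -- integrals over strata
  set IA := ∫ ω in {ω | S1 ω = 0 ∧ S0 ω = 0 ∧ X ω = x}, Y1 ω ∂μ with hIA_def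
  set IB := ∫ ω in {ω | S1 ω = 0 ∧ S0 ω = 1 ∧ X ω = x}, Y1 ω ∂μ with hIB_def
  have hJ : (∫ ω in {ω | S1 ω = 0 ∧ X ω = x}, Y1 ω ∂μ) = IA + IB := by
    rw [pN]
    exact setIntegral_union dAB mB hint.integrableOn hint.integrableOn
  -- identify m10x
  have hm : m10x = (IA + IB) / (a + b) := by
    rw [hm10x]
    unfold cexp
    rw [eE]
    have hnum : (∫ ω in {ω | Z ω = 1 ∧ (S1 ω = 0 ∧ X ω = x)}, Y ω ∂μ)
        = Pr μ (Z ⁻¹' ({1} : Set ℝ)) * (IA + IB) := by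
      have hcg : (∫ ω in {ω | Z ω = 1 ∧ (S1 ω = 0 ∧ X ω = x)}, Y ω ∂μ)
          = ∫ ω in {ω | Z ω = 1 ∧ (S1 ω = 0 ∧ X ω = x)}, Y1 ω ∂μ := by
        refine setIntegral_congr_fun ((hZm (measurableSet_singleton 1)).inter
          ((hS1m (measurableSet_singleton 0)).inter (hXm (measurableSet_singleton x)))) ?_
        intro ω hω
        rw [hconsY ω, if_pos hω.1]
      have hsetE : {ω | Z ω = 1 ∧ (S1 ω = 0 ∧ X ω = x)}
          = Z ⁻¹' ({1} : Set ℝ) ∩ V ⁻¹' {v : ℕ × ℝ × ℝ × ℝ × ℝ | v.2.2.1 = 0 ∧ v.1 = x} := by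
        ext ω; simp [hVdef]
      have hsetN : {ω | S1 ω = 0 ∧ X ω = x}
          = V ⁻¹' {v : ℕ × ℝ × ℝ × ℝ × ℝ | v.2.2.1 = 0 ∧ v.1 = x} := by
        ext ω; simp [hVdef]
      rw [hcg, hsetE, hIfact _ mTN, ← hsetN, hJ]
    have hden' : Pr μ {ω | Z ω = 1 ∧ (S1 ω = 0 ∧ X ω = x)}
        = Pr μ (Z ⁻¹' ({1} : Set ℝ)) * (a + b) := by
      have h2 : Pr μ {ω | Z ω = 1 ∧ (S1 ω = 0 ∧ X ω = x)}
          = Pr μ (Z ⁻¹' ({1} : Set ℝ)) * Pr μ {ω | S1 ω = 0 ∧ X ω = x} := hPrfact 1 _ mTN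
      rw [h2, hn]
    rw [hnum, hden', mul_div_mul_left _ _ (ne_of_gt hpz1)]
  -- sensitivity relation
  have hsens' : IA / a = ε * (IB / b) := hsens
  have hIAeq : IA = ε * a * (IB / b) := by
    field_simp at hsens' ⊢
    linarith [hsens']
  -- final algebra
  have h1ρ1 : 1 - ρ1x = (a + b) / px := by
    rw [hρ1]
    rw [eq_div_iff (ne_of_gt (hpxdec ▸ (by linarith : (0:ℝ) < (a + b) + c)))]
    field_simp
    linarith [hpxdec]
  have h1ρ0 : 1 - ρ0x = a / px := by
    rw [hρ0]
    rw [eq_div_iff (ne_of_gt (hpxdec ▸ (by linarith : (0:ℝ) < (a + b) + c)))]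
    field_simp
    linarith [hpxdec]
  have hρdiff : ρ0x - ρ1x = b / px := by
    rw [hρ0, hρ1]
    rw [div_sub_div_same]
    ring_nf
  have hD : ε * (1 - ρ0x) + ρ0x - ρ1x = (ε * a + b) / px := by
    have : ε * (1 - ρ0x) + ρ0x - ρ1x = ε * (1 - ρ0x) + (ρ0x - ρ1x) := by ring
    rw [this, h1ρ0, hρdiff]
    field_simp
  have hpx0 : (0:ℝ) < px := hpx
  have heab : (0:ℝ) < ε * a + b := by positivity
  unfold cexp
  rw [← hIB_def, ← hb_def, hm, h1ρ1, hD, hIAeq]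
  field_simp
end

section
/- Exposure-conditional identification under exclusion restriction: suppose Z is randomized (independent of (E, Y(0), Y(1), S(0), S(1))), E(z) = E for z = 0,1, exposure is necessary and sufficient for infection under control, exposure-conditional exclusion E[Y | Z=1, E=0] = E[Y | Z=0, E=0], consistency Y = Y(Z), S = S(Z). Then E[Y(1) | E=1] = (E[Y | Z=1] − E[Y | Z=0, S=0]·(1 − ρ̄_0)) / ρ̄_0, where ρ̄_0 = P(S=1 | Z=0). -/
open MeasureTheory ProbabilityTheory

private lemma indicator_comp_eq {α β : Type*} (f : α → β) (C : Set β) (g : β → ℝ) :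
    (fun ω => C.indicator g (f ω)) = (f ⁻¹' C).indicator (fun ω => g (f ω)) := by
  funext ω
  by_cases h : f ω ∈ C <;> simp [Set.indicator_apply, h]

private lemma indep_key {Ω : Type*} [MeasurableSpace Ω] {μ : Measure Ω} [IsProbabilityMeasure μ]
    {Z : Ω → ℝ} {T : Ω → ℝ × ℝ × ℝ × ℝ × ℝ}
    (hindep : IndepFun Z T μ) (hZm : Measurable Z) (hTm : Measurable T)
    {h : ℝ × ℝ × ℝ × ℝ × ℝ → ℝ} (hh : Measurable h) (z : ℝ) :
    ∫ ω in Z ⁻¹' {z}, h (T ω) ∂μ = (μ (Z ⁻¹' {z})).toReal * ∫ ω, h (T ω) ∂μ := by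
  have hA : MeasurableSet (Z ⁻¹' {z}) := hZm (measurableSet_singleton z)
  have hrw : (fun ω => ({z} : Set ℝ).indicator (fun _ => (1:ℝ)) (Z ω))
      = (Z ⁻¹' {z}).indicator (fun _ => (1:ℝ)) := indicator_comp_eq Z {z} (fun _ => 1)
  have hi : IndepFun (fun ω => ({z} : Set ℝ).indicator (fun _ => (1:ℝ)) (Z ω))
      (fun ω => h (T ω)) μ :=
    hindep.comp (measurable_const.indicator (measurableSet_singleton z)) hh
  have hmul := hi.integral_fun_mul_eq_mul_integral
    ((measurable_const.indicator (measurableSet_singleton z)).comp hZm).aestronglyMeasurable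
    (hh.comp hTm).aestronglyMeasurable
  have hl : ∫ ω, ({z} : Set ℝ).indicator (fun _ => (1:ℝ)) (Z ω) * h (T ω) ∂μ
      = ∫ ω in Z ⁻¹' {z}, h (T ω) ∂μ := by
    rw [← integral_indicator hA]
    congr 1
    funext ω
    by_cases hω : Z ω ∈ ({z} : Set ℝ) <;> simp [Set.indicator_apply, hω]
  have hr : ∫ ω, ({z} : Set ℝ).indicator (fun _ => (1:ℝ)) (Z ω) ∂μ
      = (μ (Z ⁻¹' {z})).toReal := by
    rw [hrw, integral_indicator hA]
    simp [measureReal_def]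
  rw [← hl, hmul, hr]

private lemma indep_key2 {Ω : Type*} [MeasurableSpace Ω] {μ : Measure Ω} [IsProbabilityMeasure μ]
    {Z : Ω → ℝ} {T : Ω → ℝ × ℝ × ℝ × ℝ × ℝ}
    (hindep : IndepFun Z T μ) (hZm : Measurable Z) (hTm : Measurable T)
    {C : Set (ℝ × ℝ × ℝ × ℝ × ℝ)} (hC : MeasurableSet C)
    {f : ℝ × ℝ × ℝ × ℝ × ℝ → ℝ} (hf : Measurable f) (z : ℝ) :
    ∫ ω in Z ⁻¹' {z} ∩ T ⁻¹' C, f (T ω) ∂μ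
      = (μ (Z ⁻¹' {z})).toReal * ∫ ω in T ⁻¹' C, f (T ω) ∂μ := by
  have h1 := indep_key hindep hZm hTm (hf.indicator hC) z
  rw [show (fun ω => C.indicator f (T ω)) = (T ⁻¹' C).indicator (fun ω => f (T ω)) from
    indicator_comp_eq T C f] at h1
  rwa [setIntegral_indicator (hTm hC), integral_indicator (hTm hC)] at h1

private lemma indep_key3 {Ω : Type*} [MeasurableSpace Ω] {μ : Measure Ω} [IsProbabilityMeasure μ]
    {Z : Ω → ℝ} {T : Ω → ℝ × ℝ × ℝ × ℝ × ℝ}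
    (hindep : IndepFun Z T μ) (hZm : Measurable Z) (hTm : Measurable T)
    {C : Set (ℝ × ℝ × ℝ × ℝ × ℝ)} (hC : MeasurableSet C) (z : ℝ) :
    (μ (Z ⁻¹' {z} ∩ T ⁻¹' C)).toReal
      = (μ (Z ⁻¹' {z})).toReal * (μ (T ⁻¹' C)).toReal := by
  have h1 := indep_key2 hindep hZm hTm hC (measurable_const : Measurable (fun _ => (1:ℝ))) z
  simpa [measureReal_def] using h1

/-- Exposure-conditional identification under the exposure-conditional exclusion restriction:
`E[Y(1)|E=1] = (E[Y|Z=1] − E[Y|Z=0,S=0](1−ρ̄₀))/ρ̄₀`. -/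
theorem id_exposure_conditional_ER
    {Ω : Type*} [MeasurableSpace Ω] (μ : Measure Ω) [IsProbabilityMeasure μ]
    (Z E S0 S1 Y0 Y1 S Y : Ω → ℝ) (ρ0 : ℝ)
    (hZm : Measurable Z) (hEm : Measurable E)
    (hS0m : Measurable S0) (hS1m : Measurable S1)
    (hY0m : Measurable Y0) (hY1m : Measurable Y1)
    (hZ : ∀ ω, Z ω = 0 ∨ Z ω = 1) (hEbin : ∀ ω, E ω = 0 ∨ E ω = 1)
    (hS0 : ∀ ω, S0 ω = 0 ∨ S0 ω = 1) (hS1 : ∀ ω, S1 ω = 0 ∨ S1 ω = 1)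
    (hindep : IndepFun Z (fun ω => (E ω, S0 ω, S1 ω, Y0 ω, Y1 ω)) μ)
    (hconsS : ∀ ω, S ω = if Z ω = 1 then S1 ω else S0 ω)
    (hconsY : ∀ ω, Y ω = if Z ω = 1 then Y1 ω else Y0 ω)
    (hint0 : Integrable Y0 μ) (hint1 : Integrable Y1 μ)
    -- exposure sufficient and necessary for infection under control
    (hsuff : Pr μ {ω | S ω = 1 ∧ E ω = 1 ∧ Z ω = 0} = Pr μ {ω | E ω = 1 ∧ Z ω = 0})
    (hnec : Pr μ {ω | S ω = 1 ∧ E ω = 0 ∧ Z ω = 0} = 0)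
    -- exposure-conditional exclusion restriction
    (hER : cexp μ Y {ω | Z ω = 1 ∧ E ω = 0} = cexp μ Y {ω | Z ω = 0 ∧ E ω = 0})
    (hρ0 : ρ0 = Pr μ {ω | S ω = 1 ∧ Z ω = 0} / Pr μ {ω | Z ω = 0})
    (hpos0 : 0 < Pr μ {ω | Z ω = 0}) (hpos1 : 0 < Pr μ {ω | Z ω = 1})
    (hposE : 0 < Pr μ {ω | E ω = 1}) (hEl1 : Pr μ {ω | E ω = 1} < 1)
    (hρ0pos : 0 < ρ0)
    (hpos00 : 0 < Pr μ {ω | Z ω = 0 ∧ S ω = 0})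
    (hpos1E0 : 0 < Pr μ {ω | Z ω = 1 ∧ E ω = 0}) :
    cexp μ Y1 {ω | E ω = 1}
      = (cexp μ Y {ω | Z ω = 1}
          - cexp μ Y {ω | Z ω = 0 ∧ S ω = 0} * (1 - ρ0)) / ρ0 := by
  classical
  have h01 : (0:ℝ) ≠ 1 := by norm_num
  set T : Ω → ℝ × ℝ × ℝ × ℝ × ℝ := fun ω => (E ω, S0 ω, S1 ω, Y0 ω, Y1 ω) with hTdef
  have hTm : Measurable T :=
    hEm.prodMk (hS0m.prodMk (hS1m.prodMk (hY0m.prodMk hY1m)))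
  have hSZ0 : ∀ ω, Z ω = 0 → S ω = S0 ω := fun ω h => by
    rw [hconsS ω, if_neg (show ¬ Z ω = 1 by rw [h]; exact h01)]
  have hYZ0 : ∀ ω, Z ω = 0 → Y ω = Y0 ω := fun ω h => by
    rw [hconsY ω, if_neg (show ¬ Z ω = 1 by rw [h]; exact h01)]
  have hYZ1 : ∀ ω, Z ω = 1 → Y ω = Y1 ω := fun ω h => by rw [hconsY ω, if_pos h]
  have mE1 : MeasurableSet {ω | E ω = 1} := hEm (measurableSet_singleton 1)
  have mE0 : MeasurableSet {ω | E ω = 0} := hEm (measurableSet_singleton 0)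
  have mZ1 : MeasurableSet {ω | Z ω = 1} := hZm (measurableSet_singleton 1)
  have mZ0 : MeasurableSet {ω | Z ω = 0} := hZm (measurableSet_singleton 0)
  -- null sets from necessity/sufficiency
  have hSset1 : {ω | S ω = 1 ∧ E ω = 0 ∧ Z ω = 0} = {ω | S0 ω = 1 ∧ E ω = 0 ∧ Z ω = 0} := by
    ext ω
    simp only [Set.mem_setOf_eq]
    constructor
    · rintro ⟨hs, he, hz⟩
      exact ⟨by rw [← hSZ0 ω hz]; exact hs, he, hz⟩
    · rintro ⟨hs, he, hz⟩
      exact ⟨by rw [hSZ0 ω hz]; exact hs, he, hz⟩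
  have hμnec : μ {ω | S0 ω = 1 ∧ E ω = 0 ∧ Z ω = 0} = 0 := by
    have h := hnec
    rw [hSset1] at h
    simp only [Pr] at h
    rcases (ENNReal.toReal_eq_zero_iff _).mp h with h' | h'
    · exact h'
    · exact absurd h' (measure_ne_top μ _)
  have hSset2 : {ω | S ω = 1 ∧ E ω = 1 ∧ Z ω = 0} = {ω | S0 ω = 1 ∧ E ω = 1 ∧ Z ω = 0} := by
    ext ω
    simp only [Set.mem_setOf_eq]
    constructor
    · rintro ⟨hs, he, hz⟩
      exact ⟨by rw [← hSZ0 ω hz]; exact hs, he, hz⟩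
    · rintro ⟨hs, he, hz⟩
      exact ⟨by rw [hSZ0 ω hz]; exact hs, he, hz⟩
  have hμsuff : μ {ω | S0 ω = 1 ∧ E ω = 1 ∧ Z ω = 0} = μ {ω | E ω = 1 ∧ Z ω = 0} := by
    have h := hsuff
    rw [hSset2] at h
    simp only [Pr] at h
    exact (ENNReal.toReal_eq_toReal_iff' (measure_ne_top μ _) (measure_ne_top μ _)).mp h
  have mA : MeasurableSet {ω | S0 ω = 1 ∧ E ω = 1 ∧ Z ω = 0} :=
    (hS0m (measurableSet_singleton 1)).inter (mE1.inter mZ0)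
  have hμN2 : μ ({ω | E ω = 1 ∧ Z ω = 0} \ {ω | S0 ω = 1 ∧ E ω = 1 ∧ Z ω = 0}) = 0 := by
    have hsub : {ω | S0 ω = 1 ∧ E ω = 1 ∧ Z ω = 0} ⊆ {ω | E ω = 1 ∧ Z ω = 0} :=
      fun ω hω => ⟨hω.2.1, hω.2.2⟩
    rw [measure_diff hsub mA.nullMeasurableSet (measure_ne_top μ _), hμsuff, tsub_self]
  -- a.e. set equalities
  have hae1 : {ω | Z ω = 0 ∧ S ω = 0} =ᵐ[μ] {ω | Z ω = 0 ∧ E ω = 0} := by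
    have hset : {ω | Z ω = 0 ∧ S ω = 0} = {ω | Z ω = 0 ∧ S0 ω = 0} := by
      ext ω
      simp only [Set.mem_setOf_eq]
      constructor
      · rintro ⟨hz, hs⟩
        exact ⟨hz, by rw [← hSZ0 ω hz]; exact hs⟩
      · rintro ⟨hz, hs⟩
        exact ⟨hz, by rw [hSZ0 ω hz]; exact hs⟩
    rw [hset, MeasureTheory.ae_eq_set]
    constructor
    · refine measure_mono_null ?_ hμN2
      intro ω hω
      simp only [Set.mem_diff, Set.mem_setOf_eq] at hω ⊢
      obtain ⟨⟨hz, hs⟩, hne⟩ := hω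
      have he : E ω = 1 := (hEbin ω).resolve_left (fun h0 => hne ⟨hz, h0⟩)
      refine ⟨⟨he, hz⟩, fun hmem => ?_⟩
      have h1 := hmem.1
      rw [hs] at h1
      exact h01 h1
    · refine measure_mono_null ?_ hμnec
      intro ω hω
      simp only [Set.mem_diff, Set.mem_setOf_eq] at hω ⊢
      obtain ⟨⟨hz, he⟩, hne⟩ := hω
      have hs : S0 ω = 1 := (hS0 ω).resolve_left (fun h0 => hne ⟨hz, h0⟩)
      exact ⟨hs, he, hz⟩
  have hae2 : {ω | S ω = 1 ∧ Z ω = 0} =ᵐ[μ] {ω | E ω = 1 ∧ Z ω = 0} := by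
    have hset : {ω | S ω = 1 ∧ Z ω = 0} = {ω | S0 ω = 1 ∧ Z ω = 0} := by
      ext ω
      simp only [Set.mem_setOf_eq]
      constructor
      · rintro ⟨hs, hz⟩
        exact ⟨by rw [← hSZ0 ω hz]; exact hs, hz⟩
      · rintro ⟨hs, hz⟩
        exact ⟨by rw [hSZ0 ω hz]; exact hs, hz⟩
    rw [hset, MeasureTheory.ae_eq_set]
    constructor
    · refine measure_mono_null ?_ hμnec
      intro ω hω
      simp only [Set.mem_diff, Set.mem_setOf_eq] at hω ⊢
      obtain ⟨⟨hs, hz⟩, hne⟩ := hω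
      have he : E ω = 0 := (hEbin ω).resolve_right (fun h1 => hne ⟨h1, hz⟩)
      exact ⟨hs, he, hz⟩
    · refine measure_mono_null ?_ hμN2
      intro ω hω
      simp only [Set.mem_diff, Set.mem_setOf_eq] at hω ⊢
      obtain ⟨⟨he, hz⟩, hne⟩ := hω
      exact ⟨⟨he, hz⟩, fun hmem => hne ⟨hmem.1, hz⟩⟩
  -- projections and cylinder sets
  have hy1m : Measurable (fun p : ℝ × ℝ × ℝ × ℝ × ℝ => p.2.2.2.2) := by fun_prop
  have hy0m : Measurable (fun p : ℝ × ℝ × ℝ × ℝ × ℝ => p.2.2.2.1) := by fun_prop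
  have hC0 : MeasurableSet {p : ℝ × ℝ × ℝ × ℝ × ℝ | p.1 = 0} :=
    measurable_fst (measurableSet_singleton 0)
  have hC1 : MeasurableSet {p : ℝ × ℝ × ℝ × ℝ × ℝ | p.1 = 1} :=
    measurable_fst (measurableSet_singleton 1)
  set a := Pr μ {ω | Z ω = 1} with hadef
  set b := Pr μ {ω | Z ω = 0} with hbdef
  set p := Pr μ {ω | E ω = 1} with hpdef
  set q := Pr μ {ω | E ω = 0} with hqdef
  have ha : a ≠ 0 := ne_of_gt hpos1
  have hb : b ≠ 0 := ne_of_gt hpos0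
  have hp : p ≠ 0 := ne_of_gt hposE
  -- independence facts
  have key1 : ∫ ω in {ω | Z ω = 1}, Y1 ω ∂μ = a * ∫ ω, Y1 ω ∂μ :=
    indep_key hindep hZm hTm hy1m 1
  have key2 : ∫ ω in {ω | Z ω = 1 ∧ E ω = 0}, Y1 ω ∂μ
      = a * ∫ ω in {ω | E ω = 0}, Y1 ω ∂μ :=
    indep_key2 hindep hZm hTm hC0 hy1m 1
  have key3 : Pr μ {ω | Z ω = 1 ∧ E ω = 0} = a * q :=
    indep_key3 hindep hZm hTm hC0 1
  have key4 : ∫ ω in {ω | Z ω = 0 ∧ E ω = 0}, Y0 ω ∂μ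
      = b * ∫ ω in {ω | E ω = 0}, Y0 ω ∂μ :=
    indep_key2 hindep hZm hTm hC0 hy0m 0
  have key5 : Pr μ {ω | Z ω = 0 ∧ E ω = 0} = b * q :=
    indep_key3 hindep hZm hTm hC0 0
  have key6 : Pr μ {ω | E ω = 1 ∧ Z ω = 0} = b * p := by
    have h := indep_key3 hindep hZm hTm hC1 0
    have hset : Z ⁻¹' {0} ∩ T ⁻¹' {p : ℝ × ℝ × ℝ × ℝ × ℝ | p.1 = 1}
        = {ω | E ω = 1 ∧ Z ω = 0} := by
      ext ω
      constructor
      · rintro ⟨hz, he⟩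
        exact ⟨he, hz⟩
      · rintro ⟨he, hz⟩
        exact ⟨hz, he⟩
    rw [hset] at h
    exact h
  -- basic probability algebra
  have hcomp : {ω | E ω = 0} = {ω | E ω = 1}ᶜ := by
    ext ω
    simp only [Set.mem_setOf_eq, Set.mem_compl_iff]
    constructor
    · intro h0 h1
      rw [h0] at h1
      exact h01 h1
    · intro h1
      exact (hEbin ω).resolve_right h1
  have hpq : p + q = 1 := by
    rw [hpdef, hqdef]
    simp only [Pr, hcomp]
    rw [← ENNReal.toReal_add (measure_ne_top μ _) (measure_ne_top μ _),
      measure_add_measure_compl mE1]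
    simp
  have hqpos : 0 < q := by linarith
  have hq : q ≠ 0 := ne_of_gt hqpos
  -- ρ0 = p
  have hρ : ρ0 = p := by
    rw [hρ0]
    have h1 : Pr μ {ω | S ω = 1 ∧ Z ω = 0} = b * p := by
      simp only [Pr]
      rw [measure_congr hae2]
      exact key6
    rw [h1]
    exact mul_div_cancel_left₀ _ hb
  -- exclusion restriction consequence
  have hI0J0 : ∫ ω in {ω | E ω = 0}, Y1 ω ∂μ = ∫ ω in {ω | E ω = 0}, Y0 ω ∂μ := by
    have h := hER
    unfold cexp at h
    have e1 : ∫ ω in {ω | Z ω = 1 ∧ E ω = 0}, Y ω ∂μ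
        = ∫ ω in {ω | Z ω = 1 ∧ E ω = 0}, Y1 ω ∂μ :=
      setIntegral_congr_fun (mZ1.inter mE0) (fun ω hω => hYZ1 ω hω.1)
    have e2 : ∫ ω in {ω | Z ω = 0 ∧ E ω = 0}, Y ω ∂μ
        = ∫ ω in {ω | Z ω = 0 ∧ E ω = 0}, Y0 ω ∂μ :=
      setIntegral_congr_fun (mZ0.inter mE0) (fun ω hω => hYZ0 ω hω.1)
    rw [e1, e2, key2, key4, key3, key5,
      mul_div_mul_left _ _ ha, mul_div_mul_left _ _ hb] at h
    field_simp at h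
    exact h
  -- the three conditional expectations
  have hc1 : cexp μ Y {ω | Z ω = 1} = ∫ ω, Y1 ω ∂μ := by
    unfold cexp
    rw [setIntegral_congr_fun mZ1 (fun ω hω => hYZ1 ω hω), key1, ← hadef]
    exact mul_div_cancel_left₀ _ ha
  have hc2 : cexp μ Y {ω | Z ω = 0 ∧ S ω = 0} = (∫ ω in {ω | E ω = 0}, Y0 ω ∂μ) / q := by
    unfold cexp
    have hnum : ∫ ω in {ω | Z ω = 0 ∧ S ω = 0}, Y ω ∂μ
        = b * ∫ ω in {ω | E ω = 0}, Y0 ω ∂μ := by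
      have e2 : ∫ ω in {ω | Z ω = 0 ∧ E ω = 0}, Y ω ∂μ
          = ∫ ω in {ω | Z ω = 0 ∧ E ω = 0}, Y0 ω ∂μ :=
        setIntegral_congr_fun (mZ0.inter mE0) (fun ω hω => hYZ0 ω hω.1)
      rw [setIntegral_congr_set hae1, e2]
      exact key4
    have hden : Pr μ {ω | Z ω = 0 ∧ S ω = 0} = b * q := by
      simp only [Pr]
      rw [measure_congr hae1]
      exact key5
    rw [hnum, hden, mul_div_mul_left _ _ hb]
  have hc3 : cexp μ Y1 {ω | E ω = 1}
      = ((∫ ω, Y1 ω ∂μ) - ∫ ω in {ω | E ω = 0}, Y1 ω ∂μ) / p := by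
    unfold cexp
    rw [← hpdef]
    congr 1
    have h := integral_add_compl mE1 hint1
    rw [← hcomp] at h
    linarith
  rw [hc3, hc1, hc2, hρ, hI0J0]
  have h1q : (1 : ℝ) - p = q := by linarith
  rw [h1q, div_mul_cancel₀ _ hq]
end

section
/- If both the exclusion restriction (Y(1) = Y(0) a.s. on {S(0)=0, S(1)=0}) and partial principal ignorability (Y(1) ⫫ S(0) | X, S(1)=0) hold, together with randomization, consistency, and monotonicity, then Y is conditionally mean-independent of Z given (S=0, X): E[Y | Z=1, S=0, X=x] = E[Y | Z=0, S=0, X=x] for all x with both conditioning events having positive probability. -/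
open MeasureTheory ProbabilityTheory

/-- Independence lets a set-integral over an intersection of preimages factor. -/
lemma indep_setIntegral_factor {Ω β γ : Type*} [MeasurableSpace Ω] [MeasurableSpace β]
    [MeasurableSpace γ] (μ : Measure Ω) [IsProbabilityMeasure μ] {Z : Ω → β} {W : Ω → γ}
    (hZ : Measurable Z) (hW : Measurable W) (hindep : IndepFun Z W μ)
    {s : Set β} {t : Set γ} (hs : MeasurableSet s) (ht : MeasurableSet t)
    {f : γ → ℝ} (hf : Measurable f) (hfi : Integrable (fun ω => f (W ω)) μ) :
    ∫ ω in Z ⁻¹' s ∩ W ⁻¹' t, f (W ω) ∂μ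
      = (μ (Z ⁻¹' s)).toReal * ∫ ω in W ⁻¹' t, f (W ω) ∂μ := by
  have h1 : IndepFun ((s.indicator (fun _ => (1:ℝ))) ∘ Z)
      ((fun p => f p * t.indicator (fun _ => (1:ℝ)) p) ∘ W) μ :=
    hindep.comp (measurable_one.indicator hs) (hf.mul (measurable_one.indicator ht))
  have hind1 : ((s.indicator (fun _ => (1:ℝ))) ∘ Z)
      = (Z ⁻¹' s).indicator (fun _ => (1:ℝ)) := by
    funext ω; by_cases h : Z ω ∈ s <;> simp [Set.indicator_apply, h, Function.comp]
  have hind2 : ((fun p => f p * t.indicator (fun _ => (1:ℝ)) p) ∘ W)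
      = (W ⁻¹' t).indicator (fun ω => f (W ω)) := by
    funext ω; by_cases h : W ω ∈ t <;> simp [Set.indicator_apply, h, Function.comp]
  have hprod : ((s.indicator (fun _ => (1:ℝ))) ∘ Z) *
      ((fun p => f p * t.indicator (fun _ => (1:ℝ)) p) ∘ W)
      = (Z ⁻¹' s ∩ W ⁻¹' t).indicator (fun ω => f (W ω)) := by
    funext ω
    by_cases h1 : Z ω ∈ s <;> by_cases h2 : W ω ∈ t <;>
      simp [Set.indicator_apply, h1, h2, Set.mem_inter_iff, Function.comp]
  have hint1 : Integrable ((s.indicator (fun _ => (1:ℝ))) ∘ Z) μ := by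
    rw [hind1]; exact (integrable_const (1:ℝ)).indicator (hZ hs)
  have hint2 : Integrable ((fun p => f p * t.indicator (fun _ => (1:ℝ)) p) ∘ W) μ := by
    rw [hind2]; exact hfi.indicator (hW ht)
  have hmul := h1.integral_mul_eq_mul_integral hint1.aestronglyMeasurable hint2.aestronglyMeasurable
  rw [hprod] at hmul
  rw [hind1, hind2] at hmul
  rw [integral_indicator ((hZ hs).inter (hW ht)),
    integral_indicator_const (1:ℝ) (hZ hs), integral_indicator (hW ht)] at hmul
  simpa [Measure.real] using hmul

/-- If both the exclusion restriction and partial principal ignorability hold, then the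
observed outcome is conditionally mean-independent of vaccination given `(S=0, X)`. -/
theorem er_and_ppi_imply_mean_independence
    {Ω : Type*} [MeasurableSpace Ω] (μ : Measure Ω) [IsProbabilityMeasure μ]
    (X : Ω → ℕ) (Z S0 S1 Y0 Y1 S Y : Ω → ℝ)
    (hXm : Measurable X) (hZm : Measurable Z)
    (hS0m : Measurable S0) (hS1m : Measurable S1)
    (hY0m : Measurable Y0) (hY1m : Measurable Y1)
    (hZ : ∀ ω, Z ω = 0 ∨ Z ω = 1)
    (hS0 : ∀ ω, S0 ω = 0 ∨ S0 ω = 1) (hS1 : ∀ ω, S1 ω = 0 ∨ S1 ω = 1)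
    (hindep : IndepFun Z (fun ω => (X ω, S0 ω, S1 ω, Y0 ω, Y1 ω)) μ)
    (hconsS : ∀ ω, S ω = if Z ω = 1 then S1 ω else S0 ω)
    (hconsY : ∀ ω, Y ω = if Z ω = 1 then Y1 ω else Y0 ω)
    (hmono : ∀ᵐ ω ∂μ, S1 ω ≤ S0 ω)
    (hint0 : Integrable Y0 μ) (hint1 : Integrable Y1 μ)
    -- exclusion restriction: Y(1) = Y(0) a.s. on {S(0)=0}
    (hER : ∀ᵐ ω ∂μ, S0 ω = 0 → Y1 ω = Y0 ω)
    -- partial principal ignorability: Y(1) ⫫ S(0) given (X = x, S(1) = 0)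
    (hPPI : ∀ (x : ℕ) (B : Set ℝ), MeasurableSet B → ∀ s₀ : ℝ,
      μ ({ω | Y1 ω ∈ B ∧ S0 ω = s₀} ∩ {ω | X ω = x ∧ S1 ω = 0})
          * μ {ω | X ω = x ∧ S1 ω = 0}
        = μ ({ω | Y1 ω ∈ B} ∩ {ω | X ω = x ∧ S1 ω = 0})
          * μ ({ω | S0 ω = s₀} ∩ {ω | X ω = x ∧ S1 ω = 0})) :
    ∀ x : ℕ,
      0 < Pr μ {ω | Z ω = 1 ∧ S ω = 0 ∧ X ω = x} →
      0 < Pr μ {ω | Z ω = 0 ∧ S ω = 0 ∧ X ω = x} →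
      cexp μ Y {ω | Z ω = 1 ∧ S ω = 0 ∧ X ω = x}
        = cexp μ Y {ω | Z ω = 0 ∧ S ω = 0 ∧ X ω = x} := by
  intro x h1pos h0pos
  set W : Ω → ℕ × ℝ × ℝ × ℝ × ℝ := fun ω => (X ω, S0 ω, S1 ω, Y0 ω, Y1 ω) with hW
  have hWm : Measurable W := by
    exact hXm.prodMk (hS0m.prodMk (hS1m.prodMk (hY0m.prodMk hY1m)))
  -- target sets in the tuple space
  set T1 : Set (ℕ × ℝ × ℝ × ℝ × ℝ) := {p | p.1 = x ∧ p.2.2.1 = 0} with hT1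
  set T0 : Set (ℕ × ℝ × ℝ × ℝ × ℝ) := {p | p.1 = x ∧ p.2.1 = 0} with hT0
  have hT1m : MeasurableSet T1 := by
    have h : T1 = (fun p : ℕ × ℝ × ℝ × ℝ × ℝ => p.1) ⁻¹' {x} ∩ (fun p : ℕ × ℝ × ℝ × ℝ × ℝ => p.2.2.1) ⁻¹' {0} := rfl
    rw [h]
    exact (measurable_fst (measurableSet_singleton x)).inter
      (measurable_snd.snd.fst (measurableSet_singleton (0:ℝ)))
  have hT0m : MeasurableSet T0 := by
    have h : T0 = (fun p : ℕ × ℝ × ℝ × ℝ × ℝ => p.1) ⁻¹' {x} ∩ (fun p : ℕ × ℝ × ℝ × ℝ × ℝ => p.2.1) ⁻¹' {0} := rfl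
    rw [h]
    exact (measurable_fst (measurableSet_singleton x)).inter
      (measurable_snd.fst (measurableSet_singleton (0:ℝ)))
  set C : Set Ω := {ω | X ω = x ∧ S1 ω = 0} with hC
  set C0 : Set Ω := {ω | X ω = x ∧ S0 ω = 0} with hC0
  have hCW : W ⁻¹' T1 = C := rfl
  have hC0W : W ⁻¹' T0 = C0 := rfl
  have hCm : MeasurableSet C := hCW ▸ hWm hT1m
  have hC0m : MeasurableSet C0 := hC0W ▸ hWm hT0m
  -- rewrite the conditioning events
  have hA1 : {ω | Z ω = 1 ∧ S ω = 0 ∧ X ω = x} = Z ⁻¹' {1} ∩ W ⁻¹' T1 := by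
    ext ω
    simp only [Set.mem_setOf_eq, Set.mem_inter_iff, Set.mem_preimage, Set.mem_singleton_iff,
      hconsS ω, hT1]
    constructor
    · rintro ⟨h1, h2, h3⟩
      rw [if_pos h1] at h2
      exact ⟨h1, h3, h2⟩
    · rintro ⟨h1, h3, h2⟩
      rw [if_pos h1]
      exact ⟨h1, h2, h3⟩
  have hA0 : {ω | Z ω = 0 ∧ S ω = 0 ∧ X ω = x} = Z ⁻¹' {0} ∩ W ⁻¹' T0 := by
    ext ω
    have hne : Z ω = 0 → ¬ (Z ω = 1) := by intro h h'; rw [h] at h'; norm_num at h'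
    simp only [Set.mem_setOf_eq, Set.mem_inter_iff, Set.mem_preimage, Set.mem_singleton_iff,
      hconsS ω, hT0]
    constructor
    · rintro ⟨h1, h2, h3⟩
      rw [if_neg (hne h1)] at h2
      exact ⟨h1, h3, h2⟩
    · rintro ⟨h1, h3, h2⟩
      rw [if_neg (hne h1)]
      exact ⟨h1, h2, h3⟩
  -- Y agrees with Y1 resp. Y0 on these events
  have hYeq1 : ∀ ω ∈ Z ⁻¹' {(1:ℝ)} ∩ W ⁻¹' T1, Y ω = Y1 ω := by
    rintro ω ⟨h1, _⟩
    have h1' : Z ω = 1 := h1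
    rw [hconsY ω, if_pos h1']
  have hYeq0 : ∀ ω ∈ Z ⁻¹' {(0:ℝ)} ∩ W ⁻¹' T0, Y ω = Y0 ω := by
    rintro ω ⟨h1, _⟩
    have : Z ω = 0 := h1
    rw [hconsY ω, if_neg (by rw [this]; norm_num)]
  -- factor measures
  have hμ1 : μ (Z ⁻¹' {(1:ℝ)} ∩ W ⁻¹' T1) = μ (Z ⁻¹' {1}) * μ C := by
    rw [← hCW]
    exact hindep.measure_inter_preimage_eq_mul _ _ (measurableSet_singleton 1) hT1m
  have hμ0 : μ (Z ⁻¹' {(0:ℝ)} ∩ W ⁻¹' T0) = μ (Z ⁻¹' {0}) * μ C0 := by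
    rw [← hC0W]
    exact hindep.measure_inter_preimage_eq_mul _ _ (measurableSet_singleton 0) hT0m
  -- factor integrals
  have hI1 : ∫ ω in Z ⁻¹' {(1:ℝ)} ∩ W ⁻¹' T1, Y1 ω ∂μ
      = (μ (Z ⁻¹' {1})).toReal * ∫ ω in C, Y1 ω ∂μ := by
    rw [← hCW]
    exact indep_setIntegral_factor μ hZm hWm hindep (measurableSet_singleton 1) hT1m
      (f := fun p => p.2.2.2.2)
      measurable_snd.snd.snd.snd hint1
  have hI0 : ∫ ω in Z ⁻¹' {(0:ℝ)} ∩ W ⁻¹' T0, Y0 ω ∂μ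
      = (μ (Z ⁻¹' {0})).toReal * ∫ ω in C0, Y0 ω ∂μ := by
    rw [← hC0W]
    exact indep_setIntegral_factor μ hZm hWm hindep (measurableSet_singleton 0) hT0m
      (f := fun p => p.2.2.2.1)
      measurable_snd.snd.snd.fst hint0
  -- positivity of the factors
  have hfin : ∀ A : Set Ω, μ A ≠ ⊤ := fun A => (measure_lt_top μ A).ne
  have hμ1ne : μ (Z ⁻¹' {(1:ℝ)}) ≠ 0 ∧ μ C ≠ 0 := by
    have : μ {ω | Z ω = 1 ∧ S ω = 0 ∧ X ω = x} ≠ 0 := by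
      intro h
      rw [Pr, h] at h1pos
      simp at h1pos
    rw [hA1, hμ1] at this
    exact ⟨fun h => this (by rw [h, zero_mul]), fun h => this (by rw [h, mul_zero])⟩
  have hμ0ne : μ (Z ⁻¹' {(0:ℝ)}) ≠ 0 ∧ μ C0 ≠ 0 := by
    have : μ {ω | Z ω = 0 ∧ S ω = 0 ∧ X ω = x} ≠ 0 := by
      intro h
      rw [Pr, h] at h0pos
      simp at h0pos
    rw [hA0, hμ0] at this
    exact ⟨fun h => this (by rw [h, zero_mul]), fun h => this (by rw [h, mul_zero])⟩
  -- reduce the two conditional expectations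
  have hcexp1 : cexp μ Y {ω | Z ω = 1 ∧ S ω = 0 ∧ X ω = x}
      = (∫ ω in C, Y1 ω ∂μ) / (μ C).toReal := by
    rw [cexp, Pr, hA1, setIntegral_congr_fun ((hZm (measurableSet_singleton 1)).inter (hWm hT1m))
      hYeq1, hI1, hμ1, ENNReal.toReal_mul]
    rw [mul_div_mul_left _ _ (by
      simpa [ENNReal.toReal_eq_zero_iff, hfin _] using hμ1ne.1)]
  have hcexp0 : cexp μ Y {ω | Z ω = 0 ∧ S ω = 0 ∧ X ω = x}
      = (∫ ω in C0, Y0 ω ∂μ) / (μ C0).toReal := by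
    rw [cexp, Pr, hA0, setIntegral_congr_fun ((hZm (measurableSet_singleton 0)).inter (hWm hT0m))
      hYeq0, hI0, hμ0, ENNReal.toReal_mul]
    rw [mul_div_mul_left _ _ (by
      simpa [ENNReal.toReal_eq_zero_iff, hfin _] using hμ0ne.1)]
  rw [hcexp1, hcexp0]
  -- use ER: replace Y0 by Y1 on C0
  have hERint : ∫ ω in C0, Y0 ω ∂μ = ∫ ω in C0, Y1 ω ∂μ := by
    apply setIntegral_congr_ae hC0m
    filter_upwards [hER] with ω h hω
    exact (h hω.2).symm
  -- use monotonicity: C0 =ᵐ D with D = {S0 = 0} ∩ C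
  set D : Set Ω := {ω | S0 ω = 0} ∩ C with hDdef
  have hDm : MeasurableSet D := (hS0m (measurableSet_singleton 0)).inter hCm
  have hC0D : C0 =ᵐ[μ] D := by
    have : ∀ᵐ ω ∂μ, ω ∈ C0 ↔ ω ∈ D := by
      filter_upwards [hmono] with ω hm
      constructor
      · rintro ⟨hx, hs0⟩
        have hle : S1 ω ≤ 0 := by rw [← hs0]; exact hm
        have hs1 : S1 ω = 0 := by
          rcases hS1 ω with h | h
          · exact h
          · exfalso; rw [h] at hle; linarith
        exact ⟨hs0, hx, hs1⟩
      · rintro ⟨hs0, hx, _⟩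
        exact ⟨hx, hs0⟩
    exact Filter.eventuallyEq_set.mpr this
  have hμC0D : μ C0 = μ D := measure_congr hC0D
  have hintC0D : ∫ ω in C0, Y1 ω ∂μ = ∫ ω in D, Y1 ω ∂μ := setIntegral_congr_set hC0D
  have hμDne : μ D ≠ 0 := hμC0D ▸ hμ0ne.2
  -- PPI step: (∫_D Y1)/μ D = (∫_C Y1)/μ C
  have hPPIkey : ∀ B : Set ℝ, MeasurableSet B →
      μ (Y1 ⁻¹' B ∩ D) * μ C = μ (Y1 ⁻¹' B ∩ C) * μ D := by
    intro B hB
    have := hPPI x B hB 0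
    have e1 : {ω | Y1 ω ∈ B ∧ S0 ω = 0} ∩ {ω | X ω = x ∧ S1 ω = 0} = Y1 ⁻¹' B ∩ D := by
      ext ω
      simp only [Set.mem_inter_iff, Set.mem_setOf_eq, Set.mem_preimage, hDdef, hC]
      tauto
    have e2 : {ω | Y1 ω ∈ B} ∩ {ω | X ω = x ∧ S1 ω = 0} = Y1 ⁻¹' B ∩ C := rfl
    have e3 : {ω | S0 ω = 0} ∩ {ω | X ω = x ∧ S1 ω = 0} = D := rfl
    rw [e1, e2, e3] at this
    exact this
  have hmeas_eq : (μ C) • ((μ.restrict D).map Y1) = (μ D) • ((μ.restrict C).map Y1) := by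
    ext B hB
    rw [Measure.smul_apply, Measure.smul_apply, Measure.map_apply hY1m hB,
      Measure.map_apply hY1m hB, Measure.restrict_apply (hY1m hB),
      Measure.restrict_apply (hY1m hB), smul_eq_mul, smul_eq_mul, mul_comm, mul_comm (μ D)]
    exact hPPIkey B hB
  have hintDC : (μ C).toReal * ∫ ω in D, Y1 ω ∂μ = (μ D).toReal * ∫ ω in C, Y1 ω ∂μ := by
    have h1 : ∫ y, y ∂((μ C) • ((μ.restrict D).map Y1))
        = ∫ y, y ∂((μ D) • ((μ.restrict C).map Y1)) := by rw [hmeas_eq]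
    rw [integral_smul_measure, integral_smul_measure] at h1
    have hm1 : ∫ y, y ∂((μ.restrict D).map Y1) = ∫ ω in D, Y1 ω ∂μ :=
      integral_map hY1m.aemeasurable aestronglyMeasurable_id
    have hm2 : ∫ y, y ∂((μ.restrict C).map Y1) = ∫ ω in C, Y1 ω ∂μ :=
      integral_map hY1m.aemeasurable aestronglyMeasurable_id
    rw [hm1, hm2] at h1
    simpa [smul_eq_mul] using h1
  -- put it together
  have hCt : (μ C).toReal ≠ 0 := by
    simpa [ENNReal.toReal_eq_zero_iff, hfin _] using hμ1ne.2
  have hDt : (μ D).toReal ≠ 0 := by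
    simpa [ENNReal.toReal_eq_zero_iff, hfin _] using hμDne
  rw [hERint, hintC0D, hμC0D]
  field_simp
  linarith [hintDC]
end
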